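/- arXiv:1904.11684 — 7 statements merged into one kernel-verified Lean document; each statement's English description precedes it below -/
import Mathlib

section
/- Let T₁, T₂ : H → H be firmly nonexpansive, let C : H → H be β-cocoercive with β > 0, and let γ ∈ (0, 2β). Then the operator T := I - T₂ + T₁ ∘ (2T₂ - I - γ C ∘ T₂) is α-averaged with α = 2β/(4β - γ) < 1. -/
lemma key_scalar (β γ k idA idB iAB iAC iBC nA nB nC : ℝ)
    (hβ : 0 < β) (hγ0 : 0 < γ) (hk : k * (2 * β) = 4 * β - γ)
    (h1 : nB ≤ idB)
    (h2 : nA ≤ 2 * iAB - idA - γ * iAC)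
    (h3 : β * nC ≤ iBC)
    (h4 : 0 ≤ (nA - 2 * iAB + nB) - 2 * (2 * β) * (iBC - iAC) + (2 * β) ^ 2 * nC) :
    2 * (idA - idB) + k * (nA - 2 * iAB + nB) ≤ 0 := by
  have h2β : (0:ℝ) < 2 * β := by linarith
  have hexp : (2 * (idA - idB) + k * (nA - 2 * iAB + nB)) * (2 * β)
      = 4 * β * (idA - idB) + (4 * β - γ) * (nA - 2 * iAB + nB) := by
    linear_combination (nA - 2 * iAB + nB) * hk
  have hscaled : (2 * (idA - idB) + k * (nA - 2 * iAB + nB)) * (2 * β) ≤ 0 * (2 * β) := by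
    rw [hexp]
    nlinarith [mul_le_mul_of_nonneg_left h1 (by linarith : (0:ℝ) ≤ 4 * β),
      mul_le_mul_of_nonneg_left h2 (by linarith : (0:ℝ) ≤ 4 * β),
      mul_le_mul_of_nonneg_left h3 (by positivity : (0:ℝ) ≤ 4 * β * γ),
      mul_le_mul_of_nonneg_left h4 (le_of_lt hγ0)]
  exact (mul_le_mul_iff_of_pos_right h2β).mp hscaled

lemma firm_inner {H : Type*} [NormedAddCommGroup H] [InnerProductSpace ℝ H]
    (w a : H) (h : ‖a‖ ^ 2 ≤ ‖w‖ ^ 2 - ‖w - a‖ ^ 2) : ‖a‖ ^ 2 ≤ (inner ℝ w a : ℝ) := by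
  have := norm_sub_sq_real w a
  linarith

lemma core_nonexp {H : Type*} [NormedAddCommGroup H] [InnerProductSpace ℝ H]
    (β γ k : ℝ) (hβ : 0 < β) (hγ0 : 0 < γ) (hk0 : 0 < k)
    (hkeq : k * (2 * β) = 4 * β - γ)
    (d dB dA dC : H)
    (h1 : ‖dB‖ ^ 2 ≤ (inner ℝ d dB : ℝ))
    (h2 : ‖dA‖ ^ 2 ≤ (inner ℝ ((2 : ℝ) • dB - d - γ • dC) dA : ℝ))
    (h3 : β * ‖dC‖ ^ 2 ≤ (inner ℝ dB dC : ℝ)) :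
    ‖d + k • (dA - dB)‖ ≤ ‖d‖ := by
  have h2β : (0:ℝ) < 2 * β := by linarith
  have h2' : ‖dA‖ ^ 2 ≤ 2 * (inner ℝ dA dB : ℝ) - (inner ℝ d dA : ℝ) - γ * (inner ℝ dA dC : ℝ) := by
    rwa [inner_sub_left, inner_sub_left, real_inner_smul_left, real_inner_smul_left,
      real_inner_comm dA dB, real_inner_comm dA dC] at h2
  have h4 : (0:ℝ) ≤ ‖(dB - dA) - (2 * β) • dC‖ ^ 2 := by positivity
  rw [norm_sub_sq_real, norm_sub_sq_real, real_inner_smul_right, inner_sub_left,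
    norm_smul, Real.norm_eq_abs, abs_of_pos h2β, mul_pow] at h4
  have key := key_scalar β γ k (inner ℝ d dA : ℝ) (inner ℝ d dB : ℝ) (inner ℝ dA dB : ℝ)
    (inner ℝ dA dC : ℝ) (inner ℝ dB dC : ℝ) (‖dA‖ ^ 2) (‖dB‖ ^ 2) (‖dC‖ ^ 2)
    hβ hγ0 hkeq h1 h2' h3 (by have := real_inner_comm dB dA; linarith)
  have expand : ‖d + k • (dA - dB)‖ ^ 2
      = ‖d‖ ^ 2 + 2 * (k * ((inner ℝ d dA : ℝ) - (inner ℝ d dB : ℝ)))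
        + k ^ 2 * (‖dA‖ ^ 2 - 2 * (inner ℝ dA dB : ℝ) + ‖dB‖ ^ 2) := by
    rw [norm_add_sq_real, real_inner_smul_right, inner_sub_right, norm_smul,
      Real.norm_eq_abs, abs_of_pos hk0, mul_pow, norm_sub_sq_real]
    try ring
  have hsq : ‖d + k • (dA - dB)‖ ^ 2 ≤ ‖d‖ ^ 2 := by
    have hm := mul_nonpos_of_nonneg_of_nonpos (le_of_lt hk0) key
    nlinarith [hm]
  nlinarith [hsq, norm_nonneg (d + k • (dA - dB)), norm_nonneg d]

theorem three_operator_averaged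
    {H : Type*} [NormedAddCommGroup H] [InnerProductSpace ℝ H]
    (T₁ T₂ C : H → H) (β γ : ℝ) (hβ : 0 < β) (hγ : γ ∈ Set.Ioo (0 : ℝ) (2 * β))
    (hT₁ : ∀ u v : H, ‖T₁ u - T₁ v‖ ^ 2 ≤ ‖u - v‖ ^ 2 - ‖(u - T₁ u) - (v - T₁ v)‖ ^ 2)
    (hT₂ : ∀ u v : H, ‖T₂ u - T₂ v‖ ^ 2 ≤ ‖u - v‖ ^ 2 - ‖(u - T₂ u) - (v - T₂ v)‖ ^ 2)
    (hC : ∀ x y : H, β * ‖C x - C y‖ ^ 2 ≤ (inner ℝ (x - y) (C x - C y) : ℝ))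
    (T : H → H)
    (hT : ∀ x : H, T x = x - T₂ x + T₁ ((2 : ℝ) • T₂ x - x - γ • C (T₂ x))) :
    (2 * β / (4 * β - γ) < 1) ∧
    ∃ S : H → H, (∀ u v, ‖S u - S v‖ ≤ ‖u - v‖) ∧
      ∀ x, T x = (1 - 2 * β / (4 * β - γ)) • x + (2 * β / (4 * β - γ)) • S x := by
  obtain ⟨hγ0, hγ2⟩ := hγ
  have hd4 : (0:ℝ) < 4 * β - γ := by linarith
  have h2β : (0:ℝ) < 2 * β := by linarith
  obtain ⟨k, hkdef⟩ : ∃ k : ℝ, k = (4 * β - γ) / (2 * β) := ⟨_, rfl⟩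
  have hk0 : 0 < k := hkdef ▸ div_pos hd4 h2β
  have hkeq : k * (2 * β) = 4 * β - γ := by
    rw [hkdef]; exact div_mul_cancel₀ _ (ne_of_gt h2β)
  refine ⟨by rw [div_lt_one hd4]; linarith, fun x => x + k • (T x - x), ?_, ?_⟩
  · intro u v
    show ‖(u + k • (T u - u)) - (v + k • (T v - v))‖ ≤ ‖u - v‖
    have h1 : ‖T₂ u - T₂ v‖ ^ 2 ≤ (inner ℝ (u - v) (T₂ u - T₂ v) : ℝ) := by
      apply firm_inner
      have h := hT₂ u v
      rwa [show u - T₂ u - (v - T₂ v) = u - v - (T₂ u - T₂ v) from by abel] at h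
    have h2 : ‖T₁ ((2 : ℝ) • T₂ u - u - γ • C (T₂ u)) - T₁ ((2 : ℝ) • T₂ v - v - γ • C (T₂ v))‖ ^ 2
        ≤ (inner ℝ ((2 : ℝ) • (T₂ u - T₂ v) - (u - v) - γ • (C (T₂ u) - C (T₂ v)))
             (T₁ ((2 : ℝ) • T₂ u - u - γ • C (T₂ u)) - T₁ ((2 : ℝ) • T₂ v - v - γ • C (T₂ v))) : ℝ) := by
      apply firm_inner
      have h := hT₁ ((2 : ℝ) • T₂ u - u - γ • C (T₂ u)) ((2 : ℝ) • T₂ v - v - γ • C (T₂ v))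
      rwa [show ((2 : ℝ) • T₂ u - u - γ • C (T₂ u)) - T₁ ((2 : ℝ) • T₂ u - u - γ • C (T₂ u))
              - (((2 : ℝ) • T₂ v - v - γ • C (T₂ v)) - T₁ ((2 : ℝ) • T₂ v - v - γ • C (T₂ v)))
            = (((2 : ℝ) • T₂ u - u - γ • C (T₂ u)) - ((2 : ℝ) • T₂ v - v - γ • C (T₂ v)))
              - (T₁ ((2 : ℝ) • T₂ u - u - γ • C (T₂ u)) - T₁ ((2 : ℝ) • T₂ v - v - γ • C (T₂ v)))
            from by abel,
          show ((2 : ℝ) • T₂ u - u - γ • C (T₂ u)) - ((2 : ℝ) • T₂ v - v - γ • C (T₂ v))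
            = (2 : ℝ) • (T₂ u - T₂ v) - (u - v) - γ • (C (T₂ u) - C (T₂ v)) from by module] at h
    have h3 : β * ‖C (T₂ u) - C (T₂ v)‖ ^ 2 ≤ (inner ℝ (T₂ u - T₂ v) (C (T₂ u) - C (T₂ v)) : ℝ) :=
      hC (T₂ u) (T₂ v)
    have goal_eq : (u + k • (T u - u)) - (v + k • (T v - v))
        = (u - v) + k • ((T₁ ((2 : ℝ) • T₂ u - u - γ • C (T₂ u))
            - T₁ ((2 : ℝ) • T₂ v - v - γ • C (T₂ v))) - (T₂ u - T₂ v)) := by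
      rw [hT u, hT v]; module
    rw [goal_eq]
    exact core_nonexp β γ k hβ hγ0 hk0 hkeq _ _ _ _ h1 h2 h3
  · intro x
    show T x = (1 - 2 * β / (4 * β - γ)) • x + (2 * β / (4 * β - γ)) • (x + k • (T x - x))
    have hαk : (2 * β / (4 * β - γ)) * k = 1 := by
      rw [hkdef]; field_simp; exact div_self (ne_of_gt (by linarith))
    have hmod : (1 - 2 * β / (4 * β - γ)) • x + (2 * β / (4 * β - γ)) • (x + k • (T x - x))
        = x + ((2 * β / (4 * β - γ)) * k) • (T x - x) := by
      module
    rw [hmod, hαk, one_smul]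
    abel
end

section
/- Let T₁, T₂ : H → H be firmly nonexpansive, let C : H → H be β-cocoercive with β > 0. Let ε̄ ∈ (0,1), γ ∈ (0, 2βε̄), and set ᾱ = 1/(2 - ε̄). Then T := I - T₂ + T₁ ∘ (2T₂ - I - γ C ∘ T₂) satisfies, for all x, y ∈ H: ‖Tx - Ty‖² ≤ ‖x - y‖² - ((1-ᾱ)/ᾱ)‖(I-T)x - (I-T)y‖² - γ(2β - γ/ε̄)‖C(T₂x) - C(T₂y)‖². -/
set_option maxHeartbeats 1000000 in
theorem three_operator_inequality
    {H : Type*} [NormedAddCommGroup H] [InnerProductSpace ℝ H]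
    (T₁ T₂ C : H → H) (β γ ε : ℝ) (hβ : 0 < β) (hε : ε ∈ Set.Ioo (0 : ℝ) 1)
    (hγ : γ ∈ Set.Ioo (0 : ℝ) (2 * β * ε))
    (hT₁ : ∀ u v : H, ‖T₁ u - T₁ v‖ ^ 2 ≤ ‖u - v‖ ^ 2 - ‖(u - T₁ u) - (v - T₁ v)‖ ^ 2)
    (hT₂ : ∀ u v : H, ‖T₂ u - T₂ v‖ ^ 2 ≤ ‖u - v‖ ^ 2 - ‖(u - T₂ u) - (v - T₂ v)‖ ^ 2)
    (hC : ∀ x y : H, β * ‖C x - C y‖ ^ 2 ≤ (inner ℝ (x - y) (C x - C y) : ℝ))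
    (T : H → H)
    (hT : ∀ x : H, T x = x - T₂ x + T₁ ((2 : ℝ) • T₂ x - x - γ • C (T₂ x))) :
    ∀ x y : H, ‖T x - T y‖ ^ 2 ≤ ‖x - y‖ ^ 2
      - ((1 - 1 / (2 - ε)) / (1 / (2 - ε))) * ‖(x - T x) - (y - T y)‖ ^ 2
      - γ * (2 * β - γ / ε) * ‖C (T₂ x) - C (T₂ y)‖ ^ 2 := by
  obtain ⟨hε0, hε1⟩ := hε
  obtain ⟨hγ0, hγ2⟩ := hγ
  intro x y
  set d : H := x - y with hd
  set p : H := T₂ x - T₂ y with hp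
  set c : H := C (T₂ x) - C (T₂ y) with hc
  set q : H := T₁ ((2 : ℝ) • T₂ x - x - γ • C (T₂ x))
      - T₁ ((2 : ℝ) • T₂ y - y - γ • C (T₂ y)) with hq
  -- rewrite T differences
  have hTxy : T x - T y = d - p + q := by
    rw [hT x, hT y, hd, hp, hq]; abel
  have hI : (x - T x) - (y - T y) = p - q := by
    rw [hT x, hT y, hp, hq]; abel
  -- coefficient simplification
  have h2ε : (2 : ℝ) - ε ≠ 0 := by intro h; nlinarith
  have hcoef : ((1 : ℝ) - 1 / (2 - ε)) / (1 / (2 - ε)) = 1 - ε := by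
    field_simp
    ring
  -- firm nonexpansiveness of T₂ in inner form
  have hA : ‖p‖ ^ 2 ≤ (inner ℝ d p : ℝ) := by
    have h := hT₂ x y
    have he : (x - T₂ x) - (y - T₂ y) = d - p := by rw [hd, hp]; abel
    rw [he, ← hp, ← hd] at h
    have hexp : ‖d - p‖ ^ 2 = ‖d‖ ^ 2 - 2 * (inner ℝ d p : ℝ) + ‖p‖ ^ 2 :=
      norm_sub_sq_real d p
    nlinarith [h, hexp]
  -- firm nonexpansiveness of T₁ in inner form
  have hB : ‖q‖ ^ 2 ≤ 2 * (inner ℝ p q : ℝ) - (inner ℝ d q : ℝ) - γ * (inner ℝ q c : ℝ) := by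
    have h := hT₁ ((2 : ℝ) • T₂ x - x - γ • C (T₂ x)) ((2 : ℝ) • T₂ y - y - γ • C (T₂ y))
    have hz : ((2 : ℝ) • T₂ x - x - γ • C (T₂ x)) - ((2 : ℝ) • T₂ y - y - γ • C (T₂ y))
        = (2 : ℝ) • p - d - γ • c := by
      rw [hp, hd, hc, smul_sub, smul_sub]; abel
    have he : (((2 : ℝ) • T₂ x - x - γ • C (T₂ x)) - T₁ ((2 : ℝ) • T₂ x - x - γ • C (T₂ x)))
        - (((2 : ℝ) • T₂ y - y - γ • C (T₂ y)) - T₁ ((2 : ℝ) • T₂ y - y - γ • C (T₂ y)))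
        = ((2 : ℝ) • p - d - γ • c) - q := by
      rw [hq, ← hz]; abel
    rw [he, hz] at h
    have h' : ‖q‖ ^ 2 ≤ ‖(2 : ℝ) • p - d - γ • c‖ ^ 2
        - ‖((2 : ℝ) • p - d - γ • c) - q‖ ^ 2 := by rw [hq]; exact h
    have hw : (inner ℝ ((2 : ℝ) • p - d - γ • c) q : ℝ)
        = 2 * (inner ℝ p q : ℝ) - (inner ℝ d q : ℝ) - γ * (inner ℝ q c : ℝ) := by
      rw [inner_sub_left, inner_sub_left, real_inner_smul_left, real_inner_smul_left,
        real_inner_comm c q]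
    have hexp : ‖((2 : ℝ) • p - d - γ • c) - q‖ ^ 2
        = ‖(2 : ℝ) • p - d - γ • c‖ ^ 2
          - 2 * (inner ℝ ((2 : ℝ) • p - d - γ • c) q : ℝ) + ‖q‖ ^ 2 :=
      norm_sub_sq_real _ q
    rw [hw] at hexp
    nlinarith [h', hexp]
  -- cocoercivity
  have hCo : β * ‖c‖ ^ 2 ≤ (inner ℝ p c : ℝ) := by
    have h := hC (T₂ x) (T₂ y)
    rw [← hp, ← hc] at h
    exact h
  have hCo' : 2 * γ * (β * ‖c‖ ^ 2) ≤ 2 * γ * (inner ℝ p c : ℝ) :=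
    mul_le_mul_of_nonneg_left hCo (by linarith)
  -- square trick
  have hkey : (0 : ℝ) ≤ ε ^ 2 * ‖p - q‖ ^ 2
      - 2 * ε * γ * ((inner ℝ p c : ℝ) - (inner ℝ q c : ℝ)) + γ ^ 2 * ‖c‖ ^ 2 := by
    have h0 : (0 : ℝ) ≤ ‖ε • (p - q) - γ • c‖ ^ 2 := by positivity
    have hexp : ‖ε • (p - q) - γ • c‖ ^ 2
        = ‖ε • (p - q)‖ ^ 2 - 2 * (inner ℝ (ε • (p - q)) (γ • c) : ℝ) + ‖γ • c‖ ^ 2 :=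
      norm_sub_sq_real _ _
    have h1 : ‖ε • (p - q)‖ ^ 2 = ε ^ 2 * ‖p - q‖ ^ 2 := by
      rw [norm_smul]; simp [Real.norm_eq_abs, mul_pow, sq_abs]
    have h2 : ‖γ • c‖ ^ 2 = γ ^ 2 * ‖c‖ ^ 2 := by
      rw [norm_smul]; simp [Real.norm_eq_abs, mul_pow, sq_abs]
    have h3 : (inner ℝ (ε • (p - q)) (γ • c) : ℝ)
        = ε * γ * ((inner ℝ p c : ℝ) - (inner ℝ q c : ℝ)) := by
      rw [real_inner_smul_left, real_inner_smul_right, inner_sub_left]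
      ring
    rw [hexp, h1, h2, h3] at h0
    linarith
  have hSq : (0 : ℝ) ≤ ε * ‖p - q‖ ^ 2
      - 2 * γ * ((inner ℝ p c : ℝ) - (inner ℝ q c : ℝ)) + (γ ^ 2 / ε) * ‖c‖ ^ 2 := by
    have h1 := mul_nonneg (le_of_lt (one_div_pos.mpr hε0)) hkey
    have h2 : (1 / ε) * (ε ^ 2 * ‖p - q‖ ^ 2
          - 2 * ε * γ * ((inner ℝ p c : ℝ) - (inner ℝ q c : ℝ)) + γ ^ 2 * ‖c‖ ^ 2)
        = ε * ‖p - q‖ ^ 2 - 2 * γ * ((inner ℝ p c : ℝ) - (inner ℝ q c : ℝ))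
          + (γ ^ 2 / ε) * ‖c‖ ^ 2 := by
      field_simp
    linarith [h2 ▸ h1]
  -- expansions of goal norms
  have eG2 : ‖p - q‖ ^ 2 = ‖p‖ ^ 2 + ‖q‖ ^ 2 - 2 * (inner ℝ p q : ℝ) := by
    have := norm_sub_sq_real p q
    linarith
  have eG1 : ‖d - p + q‖ ^ 2
      = ‖d‖ ^ 2 + ‖p‖ ^ 2 + ‖q‖ ^ 2 - 2 * (inner ℝ d p : ℝ) + 2 * (inner ℝ d q : ℝ)
        - 2 * (inner ℝ p q : ℝ) := by
    have h1 : d - p + q = d - (p - q) := by abel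
    have h2 := norm_sub_sq_real d (p - q)
    rw [inner_sub_right] at h2
    rw [h1, h2, eG2]
    ring
  have hγε : γ * (γ / ε) = γ ^ 2 / ε := by ring
  rw [hTxy, hI, hcoef, eG1, eG2]
  rw [eG2] at hSq
  nlinarith [hA, hB, hCo', hSq]
end

section
/- Let T : H → H be nonexpansive with Fix(T) ≠ ∅. Let {ρₖ} ⊂ (0,1) with 0 < ρ̲ ≤ ρₖ ≤ ρ̄ < 1 and {αₖ} ⊂ [0, α] with α < 1 such that ∑ₖ αₖ‖xᵏ - xᵏ⁻¹‖² < ∞. Define yᵏ = xᵏ + αₖ(xᵏ - xᵏ⁻¹) and xᵏ⁺¹ = (1-ρₖ)yᵏ + ρₖTyᵏ. Then for any x* ∈ Fix(T), the limit limₖ ‖xᵏ - x*‖ exists, and {xᵏ} converges weakly to a point in Fix(T). -/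
/-- Weak convergence in a Hilbert space. -/
def WeakTendsto {H : Type*} [NormedAddCommGroup H] [InnerProductSpace ℝ H]
    (x : ℕ → H) (p : H) : Prop :=
  ∀ w : H, Filter.Tendsto (fun n => (inner ℝ (x n) w : ℝ)) Filter.atTop (nhds (inner ℝ p w))

open Filter

section Aux

variable {H : Type*} [NormedAddCommGroup H] [InnerProductSpace ℝ H]

lemma norm_combo_sq (ρ : ℝ) (a b : H) :
    ‖(1 - ρ) • a + ρ • b‖ ^ 2 = (1 - ρ) * ‖a‖ ^ 2 + ρ * ‖b‖ ^ 2 - ρ * (1 - ρ) * ‖a - b‖ ^ 2 := by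
  simp only [← real_inner_self_eq_norm_sq, inner_add_left, inner_add_right, inner_sub_left,
    inner_sub_right, real_inner_smul_left, real_inner_smul_right]
  rw [real_inner_comm b a]
  ring

lemma norm_inertia_sq (α : ℝ) (u v : H) :
    ‖u + α • (u - v)‖ ^ 2 = (1 + α) * ‖u‖ ^ 2 - α * ‖v‖ ^ 2 + α * (1 + α) * ‖u - v‖ ^ 2 := by
  simp only [← real_inner_self_eq_norm_sq, inner_add_left, inner_add_right, inner_sub_left,
    inner_sub_right, real_inner_smul_left, real_inner_smul_right]
  rw [real_inner_comm v u]
  ring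

lemma demiclosed (T : H → H) (hT : ∀ u v, ‖T u - T v‖ ≤ ‖u - v‖)
    (u : ℕ → H) (z : H) (B : ℝ)
    (hB : ∀ n, ‖u n - z‖ ≤ B)
    (hw : ∀ w : H, Tendsto (fun n => (inner ℝ (u n) w : ℝ)) atTop (nhds (inner ℝ z w)))
    (hres : Tendsto (fun n => ‖T (u n) - u n‖) atTop (nhds 0)) : T z = z := by
  have hB0 : 0 ≤ B := le_trans (norm_nonneg _) (hB 0)
  set q := z - T z with hq
  have key : ∀ n, ‖q‖ ^ 2 ≤ ‖T (u n) - u n‖ ^ 2 + 2 * ‖T (u n) - u n‖ * B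
      + 2 * ((inner ℝ z q : ℝ) - (inner ℝ (u n) q : ℝ)) := by
    intro n
    have h1 : ‖u n - T z‖ ^ 2 = ‖u n - z‖ ^ 2 + 2 * (inner ℝ (u n - z) q : ℝ) + ‖q‖ ^ 2 := by
      have : u n - T z = (u n - z) + q := by rw [hq]; abel
      rw [this, norm_add_sq_real]
    have h2 : ‖u n - T z‖ ≤ ‖T (u n) - u n‖ + ‖u n - z‖ := by
      calc ‖u n - T z‖ ≤ ‖u n - T (u n)‖ + ‖T (u n) - T z‖ := norm_sub_le_norm_sub_add_norm_sub _ _ _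
        _ ≤ ‖T (u n) - u n‖ + ‖u n - z‖ := by
            rw [norm_sub_rev]; exact add_le_add le_rfl (hT _ _)
    have h3 : ‖u n - T z‖ ^ 2 ≤ (‖T (u n) - u n‖ + ‖u n - z‖) ^ 2 :=
      pow_le_pow_left₀ (norm_nonneg _) h2 2
    have h4 : (inner ℝ (u n - z) q : ℝ) = (inner ℝ (u n) q : ℝ) - (inner ℝ z q : ℝ) := by
      rw [inner_sub_left]
    have h5 : ‖T (u n) - u n‖ * ‖u n - z‖ ≤ ‖T (u n) - u n‖ * B :=
      mul_le_mul_of_nonneg_left (hB n) (norm_nonneg _)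
    nlinarith [h1, h3, h4, h5]
  have hlim : Tendsto (fun n => ‖T (u n) - u n‖ ^ 2 + 2 * ‖T (u n) - u n‖ * B
      + 2 * ((inner ℝ z q : ℝ) - (inner ℝ (u n) q : ℝ))) atTop (nhds 0) := by
    have t1 : Tendsto (fun n => ‖T (u n) - u n‖ ^ 2) atTop (nhds 0) := by
      simpa using (hres.pow 2)
    have t2 : Tendsto (fun n => 2 * ‖T (u n) - u n‖ * B) atTop (nhds 0) := by
      simpa using ((hres.const_mul 2).mul_const B)
    have t3 : Tendsto (fun n => 2 * ((inner ℝ z q : ℝ) - (inner ℝ (u n) q : ℝ))) atTop (nhds 0) := by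
      simpa using (((hw q).const_sub (inner ℝ z q : ℝ)).const_mul 2)
    simpa using (t1.add t2).add t3
  have : ‖q‖ ^ 2 ≤ 0 := ge_of_tendsto hlim (Filter.Eventually.of_forall key)
  have hq0 : q = 0 := by
    have := sq_nonneg ‖q‖
    have hn : ‖q‖ = 0 := by nlinarith
    exact norm_eq_zero.mp hn
  have := sub_eq_zero.mp hq0
  exact this.symm
lemma exists_weak_subseq [CompleteSpace H] (x : ℕ → H) (M : ℝ) (hM : ∀ n, ‖x n‖ ≤ M) :
    ∃ (z : H) (φ : ℕ → ℕ), StrictMono φ ∧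
      ∀ w : H, Tendsto (fun i => (inner ℝ (x (φ i)) w : ℝ)) atTop (nhds (inner ℝ z w)) := by
  have hM0 : 0 ≤ M := le_trans (norm_nonneg _) (hM 0)
  -- diagonal extraction via sequential compactness of a product of intervals
  set g : ℕ → (ℕ → ℝ) := fun n j => (inner ℝ (x n) (x j) : ℝ) with hg
  set S : Set (ℕ → ℝ) := Set.pi Set.univ (fun _ => Set.Icc (-(M*M)) (M*M)) with hS
  have hScomp : IsCompact S := isCompact_univ_pi (fun _ => isCompact_Icc)
  have hgS : ∀ n, g n ∈ S := by
    intro n j _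
    have h1 : |(inner ℝ (x n) (x j) : ℝ)| ≤ ‖x n‖ * ‖x j‖ := abs_real_inner_le_norm _ _
    have h2 : ‖x n‖ * ‖x j‖ ≤ M * M :=
      mul_le_mul (hM n) (hM j) (norm_nonneg _) hM0
    have := abs_le.mp (h1.trans h2)
    exact ⟨this.1, this.2⟩
  obtain ⟨f, _, φ, hφ, hconv⟩ := hScomp.isSeqCompact hgS
  have hptwise : ∀ j, Tendsto (fun i => (inner ℝ (x (φ i)) (x j) : ℝ)) atTop (nhds (f j)) := by
    intro j
    exact (tendsto_pi_nhds.mp hconv) j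
  -- all inner ℝ products against spans converge
  have hspan : ∀ v ∈ Submodule.span ℝ (Set.range x),
      ∃ c : ℝ, Tendsto (fun i => (inner ℝ (x (φ i)) v : ℝ)) atTop (nhds c) := by
    intro v hv
    induction hv using Submodule.span_induction with
    | mem v hvmem =>
        obtain ⟨j, rfl⟩ := hvmem
        exact ⟨f j, hptwise j⟩
    | zero => exact ⟨0, by simpa using tendsto_const_nhds⟩
    | add a b _ _ ha hb =>
        obtain ⟨ca, hca⟩ := ha; obtain ⟨cb, hcb⟩ := hb
        exact ⟨ca + cb, by simpa only [inner_add_right] using hca.add hcb⟩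
    | smul r a _ ha =>
        obtain ⟨ca, hca⟩ := ha
        exact ⟨r * ca, by simpa only [real_inner_smul_right] using hca.const_mul r⟩
  -- Cauchy for arbitrary w via orthogonal projection onto closed span
  set K := (Submodule.span ℝ (Set.range x)).topologicalClosure with hK
  haveI : CompleteSpace K :=
    (Submodule.isClosed_topologicalClosure _).completeSpace_coe
  have hxK : ∀ n, x n ∈ K :=
    fun n => Submodule.le_topologicalClosure _ (Submodule.subset_span (Set.mem_range_self n))
  have hcauchy : ∀ w : H, CauchySeq (fun i => (inner ℝ (x (φ i)) w : ℝ)) := by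
    intro w
    set u : H := (K.orthogonalProjection w : H) with hu
    have hwu : ∀ n, (inner ℝ (x n) w : ℝ) = (inner ℝ (x n) u : ℝ) := by
      intro n
      have hmem : w - u ∈ Kᗮ := Submodule.sub_starProjection_mem_orthogonal (K := K) w
      have := (Submodule.mem_orthogonal K (w - u)).mp hmem (x n) (hxK n)
      have h2 : (inner ℝ (x n) (w - u) : ℝ) = 0 := this
      rw [inner_sub_right] at h2
      linarith [h2]
    rw [Metric.cauchySeq_iff']
    intro ε hε
    -- find v in the span close to u
    have huK : u ∈ closure ((Submodule.span ℝ (Set.range x) : Submodule ℝ H) : Set H) := by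
      rw [← Submodule.topologicalClosure_coe]
      exact (K.orthogonalProjection w).2
    have hε4 : 0 < ε / (4 * M + 1) := by positivity
    obtain ⟨v, hvmem, hvd⟩ := Metric.mem_closure_iff.mp huK _ hε4
    obtain ⟨c, hc⟩ := hspan v hvmem
    obtain ⟨N, hN⟩ := Metric.cauchySeq_iff'.mp hc.cauchySeq (ε / 2) (by linarith)
    refine ⟨N, fun n hn => ?_⟩
    have hbound : ∀ m : ℕ, |(inner ℝ (x m) u : ℝ) - (inner ℝ (x m) v : ℝ)| ≤ M * (ε / (4 * M + 1)) := by
      intro m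
      rw [← inner_sub_right]
      calc |(inner ℝ (x m) (u - v) : ℝ)| ≤ ‖x m‖ * ‖u - v‖ := abs_real_inner_le_norm _ _
        _ ≤ M * (ε / (4 * M + 1)) := by
            apply mul_le_mul (hM m) _ (norm_nonneg _) hM0
            rw [← dist_eq_norm]
            exact le_of_lt hvd
    have hMε : M * (ε / (4 * M + 1)) ≤ ε / 4 := by
      rw [mul_div_assoc', div_le_div_iff₀ (by positivity) (by norm_num)]
      nlinarith
    have h1 := hbound (φ n)
    have h2 := hbound (φ N)
    have h3 := hN n hn
    rw [Real.dist_eq] at h3 ⊢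
    simp only [hwu]
    have h2' : |(inner ℝ (x (φ N)) v : ℝ) - (inner ℝ (x (φ N)) u : ℝ)|
        = |(inner ℝ (x (φ N)) u : ℝ) - (inner ℝ (x (φ N)) v : ℝ)| := abs_sub_comm _ _
    have t1 : |(inner ℝ (x (φ n)) u : ℝ) - (inner ℝ (x (φ N)) u : ℝ)|
        ≤ |(inner ℝ (x (φ n)) u : ℝ) - (inner ℝ (x (φ N)) v : ℝ)|
          + |(inner ℝ (x (φ N)) v : ℝ) - (inner ℝ (x (φ N)) u : ℝ)| := abs_sub_le _ _ _
    have t2 : |(inner ℝ (x (φ n)) u : ℝ) - (inner ℝ (x (φ N)) v : ℝ)|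
        ≤ |(inner ℝ (x (φ n)) u : ℝ) - (inner ℝ (x (φ n)) v : ℝ)|
          + |(inner ℝ (x (φ n)) v : ℝ) - (inner ℝ (x (φ N)) v : ℝ)| := abs_sub_le _ _ _
    linarith
  -- define limiting functional
  set F : H → ℝ := fun w => limUnder atTop (fun i => (inner ℝ (x (φ i)) w : ℝ)) with hF
  have hFt : ∀ w : H, Tendsto (fun i => (inner ℝ (x (φ i)) w : ℝ)) atTop (nhds (F w)) :=
    fun w => (hcauchy w).tendsto_limUnder
  have hFadd : ∀ a b : H, F (a + b) = F a + F b := by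
    intro a b
    refine tendsto_nhds_unique (hFt (a + b)) ?_
    simpa only [inner_add_right] using (hFt a).add (hFt b)
  have hFsmul : ∀ (r : ℝ) (a : H), F (r • a) = r * F a := by
    intro r a
    refine tendsto_nhds_unique (hFt (r • a)) ?_
    simpa only [real_inner_smul_right] using (hFt a).const_mul r
  have hFbound : ∀ w : H, |F w| ≤ M * ‖w‖ := by
    intro w
    have : Tendsto (fun i => |(inner ℝ (x (φ i)) w : ℝ)|) atTop (nhds |F w|) := (hFt w).abs
    refine le_of_tendsto this (Eventually.of_forall fun i => ?_)
    exact (abs_real_inner_le_norm _ _).trans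
      (mul_le_mul_of_nonneg_right (hM _) (norm_nonneg _))
  set L : H →ₗ[ℝ] ℝ :=
    { toFun := F, map_add' := hFadd, map_smul' := hFsmul } with hL
  set Lc : H →L[ℝ] ℝ := LinearMap.mkContinuous L M (fun w => by
    rw [Real.norm_eq_abs]; exact hFbound w) with hLc
  refine ⟨(InnerProductSpace.toDual ℝ H).symm Lc, φ, hφ, fun w => ?_⟩
  rw [InnerProductSpace.toDual_symm_apply]
  exact hFt w
lemma mainge_key (T : H → H) (hT : ∀ u v, ‖T u - T v‖ ≤ ‖u - v‖)
    (ρ α : ℕ → ℝ) (ρlo ρhi abar : ℝ)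
    (hρlo : 0 < ρlo) (hρ : ∀ k, ρlo ≤ ρ k ∧ ρ k ≤ ρhi) (hρhi : ρhi < 1)
    (hα : ∀ k, 0 ≤ α k ∧ α k ≤ abar) (habar : abar < 1)
    (x y : ℕ → H)
    (hy : ∀ k, y k = x (k + 1) + α k • (x (k + 1) - x k))
    (hx : ∀ k, x (k + 2) = (1 - ρ k) • y k + ρ k • T (y k))
    (hsum : Summable (fun k => α k * ‖x (k + 1) - x k‖ ^ 2))
    (p : H) (hp : T p = p) :
    (∃ l : ℝ, Tendsto (fun k => ‖x k - p‖ ^ 2) atTop (nhds l)) ∧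
      Summable (fun k => ‖T (y k) - y k‖ ^ 2) := by
  set φ : ℕ → ℝ := fun k => ‖x k - p‖ ^ 2 with hφdef
  set s : ℕ → ℝ := fun k => ‖x (k + 1) - x k‖ ^ 2 with hsdef
  set t : ℕ → ℝ := fun k => ‖T (y k) - y k‖ ^ 2 with htdef
  have hφ0 : ∀ k, 0 ≤ φ k := fun k => sq_nonneg _
  have hs0 : ∀ k, 0 ≤ s k := fun k => sq_nonneg _
  have ht0 : ∀ k, 0 ≤ t k := fun k => sq_nonneg _
  have habar0 : 0 ≤ abar := le_trans (hα 0).1 (hα 0).2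
  set c : ℝ := ρlo * (1 - ρhi) with hcdef
  have hc : 0 < c := mul_pos hρlo (by linarith)
  -- key one-step inequality
  have h1 : ∀ k, φ (k + 2) ≤ (1 + α k) * φ (k + 1) - α k * φ k
      + 2 * (α k * s k) - c * t k := by
    intro k
    have e1 : x (k + 2) - p = (1 - ρ k) • (y k - p) + ρ k • (T (y k) - p) := by
      rw [hx k]; module
    have e2 : φ (k + 2) = (1 - ρ k) * ‖y k - p‖ ^ 2 + ρ k * ‖T (y k) - p‖ ^ 2
        - ρ k * (1 - ρ k) * t k := by
      show ‖x (k + 2) - p‖ ^ 2 = _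
      rw [e1, norm_combo_sq]
      rw [show (y k - p) - (T (y k) - p) = y k - T (y k) from by abel, norm_sub_rev (y k) (T (y k))]
    have e3 : ‖T (y k) - p‖ ≤ ‖y k - p‖ := by
      have := hT (y k) p; rwa [hp] at this
    have e3' : ‖T (y k) - p‖ ^ 2 ≤ ‖y k - p‖ ^ 2 :=
      pow_le_pow_left₀ (norm_nonneg _) e3 2
    have e4 : y k - p = (x (k + 1) - p) + α k • ((x (k + 1) - p) - (x k - p)) := by
      rw [hy k]; module
    have e5 : ‖y k - p‖ ^ 2 = (1 + α k) * φ (k + 1) - α k * φ k + α k * (1 + α k) * s k := by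
      rw [e4, norm_inertia_sq,
        show (x (k + 1) - p) - (x k - p) = x (k + 1) - x k from by abel]
    obtain ⟨hρ1, hρ2⟩ := hρ k
    obtain ⟨hα1, hα2⟩ := hα k
    have hρc : c ≤ ρ k * (1 - ρ k) := by nlinarith
    nlinarith [ht0 k, hs0 k, e2, e3', e5, mul_le_mul_of_nonneg_left e3' (le_of_lt (lt_of_lt_of_le hρlo hρ1)),
      mul_nonneg hα1 (hs0 k)]
  set δ : ℕ → ℝ := fun k => φ (k + 1) - φ k with hδdef
  set θ : ℕ → ℝ := fun k => max (δ k) 0 with hθdef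
  set β : ℕ → ℝ := fun k => 2 * (α k * s k) with hβdef
  have hθ0 : ∀ k, 0 ≤ θ k := fun k => le_max_right _ _
  have hβ0 : ∀ k, 0 ≤ β k := fun k =>
    mul_nonneg (by norm_num) (mul_nonneg (hα k).1 (hs0 k))
  have hβsum : Summable β := hsum.mul_left 2
  have hδθ : ∀ k, δ k ≤ θ k := fun k => le_max_left _ _
  have h3 : ∀ k, δ (k + 1) ≤ abar * θ k + β k - c * t k := by
    intro k
    have hαδ : α k * δ k ≤ abar * θ k := by
      rcases le_or_gt (δ k) 0 with h | h
      · have : α k * δ k ≤ 0 := mul_nonpos_of_nonneg_of_nonpos (hα k).1 h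
        have : 0 ≤ abar * θ k := mul_nonneg habar0 (hθ0 k)
        linarith
      · have hθk : θ k = δ k := max_eq_left h.le
        rw [hθk]
        exact mul_le_mul_of_nonneg_right (hα k).2 h.le
    have := h1 k
    have hexp : (1 + α k) * φ (k + 1) - α k * φ k = φ (k + 1) + α k * δ k := by
      simp only [hδdef]; ring
    have h2 : δ (k + 1) = φ (k + 2) - φ (k + 1) := rfl
    have hβk : β k = 2 * (α k * s k) := rfl
    rw [h2, hβk]
    linarith
  have hθrec : ∀ k, θ (k + 1) ≤ abar * θ k + β k := by
    intro k
    apply max_le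
    · have := h3 k
      have hct : 0 ≤ c * t k := mul_nonneg hc.le (ht0 k)
      linarith
    · exact add_nonneg (mul_nonneg habar0 (hθ0 k)) (hβ0 k)
  have hB0 : 0 ≤ ∑' k, β k := tsum_nonneg hβ0
  have hθpartial : ∀ n, ∑ i ∈ Finset.range n, θ i
      ≤ abar * ∑ i ∈ Finset.range n, θ i + (θ 0 + ∑' k, β k) := by
    intro n
    induction n with
    | zero => simp only [Finset.range_zero, Finset.sum_empty, mul_zero, zero_add]; exact add_nonneg (hθ0 0) hB0
    | succ m _ =>
      rw [Finset.sum_range_succ']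
      have step : ∑ i ∈ Finset.range m, θ (i + 1)
          ≤ ∑ i ∈ Finset.range m, (abar * θ i + β i) :=
        Finset.sum_le_sum fun i _ => hθrec i
      have hsplit : ∑ i ∈ Finset.range m, (abar * θ i + β i)
          = abar * ∑ i ∈ Finset.range m, θ i + ∑ i ∈ Finset.range m, β i := by
        rw [Finset.sum_add_distrib, Finset.mul_sum]
      have hsub : abar * ∑ i ∈ Finset.range m, θ i
          ≤ abar * ∑ i ∈ Finset.range (m + 1), θ i := by
        apply mul_le_mul_of_nonneg_left _ habar0
        rw [Finset.sum_range_succ]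
        linarith [hθ0 m]
      have hβle : ∑ i ∈ Finset.range m, β i ≤ ∑' k, β k :=
        Summable.sum_le_tsum _ (fun i _ => hβ0 i) hβsum
      rw [Finset.sum_range_succ'] at hsub
      linarith
  have hθsum : Summable θ := by
    apply summable_of_sum_range_le hθ0 (c := (θ 0 + ∑' k, β k) / (1 - abar))
    intro n
    rw [le_div_iff₀ (by linarith : (0:ℝ) < 1 - abar)]
    nlinarith [hθpartial n]
  -- convergence of φ
  have hTθ0 : 0 ≤ ∑' k, θ k := tsum_nonneg hθ0
  have hAconv : Tendsto (fun n => ∑ i ∈ Finset.range n, θ i) atTop (nhds (∑' k, θ k)) :=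
    hθsum.hasSum.tendsto_sum_nat
  set g : ℕ → ℝ := fun k => φ k - ∑ i ∈ Finset.range k, θ i with hgdef
  have hgant : Antitone g := by
    apply antitone_nat_of_succ_le
    intro k
    simp only [hgdef, Finset.sum_range_succ]
    have := hδθ k
    simp only [hδdef] at this
    linarith
  have hgbdd : BddBelow (Set.range g) := by
    refine ⟨-∑' k, θ k, ?_⟩
    rintro _ ⟨k, rfl⟩
    have h1' : ∑ i ∈ Finset.range k, θ i ≤ ∑' k, θ k :=
      Summable.sum_le_tsum _ (fun i _ => hθ0 i) hθsum
    simp only [hgdef]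
    linarith [hφ0 k]
  have hgconv : Tendsto g atTop (nhds (⨅ k, g k)) := tendsto_atTop_ciInf hgant hgbdd
  have hφconv : Tendsto φ atTop (nhds ((⨅ k, g k) + ∑' k, θ k)) := by
    have := hgconv.add hAconv
    refine this.congr fun k => ?_
    simp only [hgdef]; ring
  refine ⟨⟨_, hφconv⟩, ?_⟩
  -- summability of t
  have hct : Summable (fun k => c * t k) := by
    apply summable_of_sum_range_le (fun k => mul_nonneg hc.le (ht0 k))
      (c := abar * ∑' k, θ k + ∑' k, β k + φ 1)
    intro n
    have hsum1 : ∑ k ∈ Finset.range n, (c * t k)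
        ≤ ∑ k ∈ Finset.range n, (abar * θ k + β k - δ (k + 1)) :=
      Finset.sum_le_sum fun k _ => by linarith [h3 k]
    have htel : ∑ k ∈ Finset.range n, δ (k + 1) = φ (n + 1) - φ 1 := by
      have := Finset.sum_range_sub (f := fun k => φ (k + 1)) n
      simpa [hδdef] using this
    have hsplit : ∑ k ∈ Finset.range n, (abar * θ k + β k - δ (k + 1))
        = abar * ∑ k ∈ Finset.range n, θ k + ∑ k ∈ Finset.range n, β k
          - ∑ k ∈ Finset.range n, δ (k + 1) := by
      rw [Finset.sum_sub_distrib, Finset.sum_add_distrib, Finset.mul_sum]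
    have hθle : ∑ k ∈ Finset.range n, θ k ≤ ∑' k, θ k :=
      Summable.sum_le_tsum _ (fun i _ => hθ0 i) hθsum
    have hβle : ∑ k ∈ Finset.range n, β k ≤ ∑' k, β k :=
      Summable.sum_le_tsum _ (fun i _ => hβ0 i) hβsum
    have hφn : 0 ≤ φ (n + 1) := hφ0 _
    nlinarith [mul_le_mul_of_nonneg_left hθle habar0]
  have := hct.mul_left c⁻¹
  refine this.congr fun k => ?_
  field_simp

lemma cluster_unique (x : ℕ → H) (z z' : H)
    (ha : ∃ a : ℝ, Tendsto (fun k => ‖x k - z‖ ^ 2) atTop (nhds a))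
    (hb : ∃ b : ℝ, Tendsto (fun k => ‖x k - z'‖ ^ 2) atTop (nhds b))
    (φ ψ : ℕ → ℕ) (hφ : StrictMono φ) (hψ : StrictMono ψ)
    (hz : ∀ w : H, Tendsto (fun i => (inner ℝ (x (φ i)) w : ℝ)) atTop (nhds (inner ℝ z w)))
    (hz' : ∀ w : H, Tendsto (fun i => (inner ℝ (x (ψ i)) w : ℝ)) atTop (nhds (inner ℝ z' w))) :
    z = z' := by
  obtain ⟨a, ha⟩ := ha
  obtain ⟨b, hb⟩ := hb
  set w : H := z' - z with hw
  have hid : ∀ k, (inner ℝ (x k) w : ℝ)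
      = (‖x k - z‖ ^ 2 - ‖x k - z'‖ ^ 2 - ‖z‖ ^ 2 + ‖z'‖ ^ 2) / 2 := by
    intro k
    have h1 : ‖x k - z‖ ^ 2 = ‖x k‖ ^ 2 - 2 * (inner ℝ (x k) z : ℝ) + ‖z‖ ^ 2 :=
      norm_sub_sq_real _ _
    have h2 : ‖x k - z'‖ ^ 2 = ‖x k‖ ^ 2 - 2 * (inner ℝ (x k) z' : ℝ) + ‖z'‖ ^ 2 :=
      norm_sub_sq_real _ _
    have h3 : (inner ℝ (x k) w : ℝ) = (inner ℝ (x k) z' : ℝ) - (inner ℝ (x k) z : ℝ) := by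
      rw [hw, inner_sub_right]
    linarith
  have hc : Tendsto (fun k => (inner ℝ (x k) w : ℝ)) atTop
      (nhds ((a - b - ‖z‖ ^ 2 + ‖z'‖ ^ 2) / 2)) := by
    have := (((ha.sub hb).sub_const (‖z‖ ^ 2)).add_const (‖z'‖ ^ 2)).div_const 2
    exact this.congr fun k => (hid k).symm
  have l1 : (inner ℝ z w : ℝ) = (a - b - ‖z‖ ^ 2 + ‖z'‖ ^ 2) / 2 :=
    tendsto_nhds_unique (hz w) (hc.comp hφ.tendsto_atTop)
  have l2 : (inner ℝ z' w : ℝ) = (a - b - ‖z‖ ^ 2 + ‖z'‖ ^ 2) / 2 :=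
    tendsto_nhds_unique (hz' w) (hc.comp hψ.tendsto_atTop)
  have hz0 : (inner ℝ (z' - z) (z' - z) : ℝ) = 0 := by
    rw [inner_sub_left]
    rw [← hw]
    linarith
  have := inner_self_eq_zero.mp hz0
  rw [sub_eq_zero] at this
  exact this.symm

end Aux

/-- Maingé's convergence theorem for the inertial Krasnoselskii–Mann iteration.
Here `x 0` plays the role of `x⁻¹` and `x 1` of `x⁰`; `y k, x (k+2)` are the iterates. -/
theorem inertial_KM_convergence_Mainge
    {H : Type*} [NormedAddCommGroup H] [InnerProductSpace ℝ H] [CompleteSpace H]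
    (T : H → H) (hT : ∀ u v, ‖T u - T v‖ ≤ ‖u - v‖)
    (hFix : ∃ p : H, T p = p)
    (ρ α : ℕ → ℝ) (ρlo ρhi abar : ℝ)
    (hρlo : 0 < ρlo) (hρ : ∀ k, ρlo ≤ ρ k ∧ ρ k ≤ ρhi) (hρhi : ρhi < 1)
    (hα : ∀ k, 0 ≤ α k ∧ α k ≤ abar) (habar : abar < 1)
    (x y : ℕ → H)
    (hy : ∀ k, y k = x (k + 1) + α k • (x (k + 1) - x k))
    (hx : ∀ k, x (k + 2) = (1 - ρ k) • y k + ρ k • T (y k))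
    (hsum : Summable (fun k => α k * ‖x (k + 1) - x k‖ ^ 2)) :
    (∀ xstar : H, T xstar = xstar →
        ∃ l : ℝ, Filter.Tendsto (fun k => ‖x k - xstar‖) Filter.atTop (nhds l)) ∧
    ∃ p : H, T p = p ∧ WeakTendsto x p := by
  obtain ⟨p0, hp0⟩ := hFix
  have key : ∀ z : H, T z = z →
      (∃ l : ℝ, Tendsto (fun k => ‖x k - z‖ ^ 2) atTop (nhds l)) ∧
        Summable (fun k => ‖T (y k) - y k‖ ^ 2) :=
    fun z hz => mainge_key T hT ρ α ρlo ρhi abar hρlo hρ hρhi hα habar x y hy hx hsum z hz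
  constructor
  · intro xstar hxs
    obtain ⟨l, hl⟩ := (key xstar hxs).1
    refine ⟨Real.sqrt l, ?_⟩
    have := (Real.continuous_sqrt.tendsto l).comp hl
    refine this.congr fun k => ?_
    simp [Function.comp, Real.sqrt_sq (norm_nonneg _)]
  obtain ⟨l0, hl0⟩ := (key p0 hp0).1
  have htsum : Summable (fun k => ‖T (y k) - y k‖ ^ 2) := (key p0 hp0).2
  -- uniform bound on the iterates
  obtain ⟨C, hC0, hC⟩ : ∃ C : ℝ, 0 ≤ C ∧ ∀ k, ‖x k‖ ≤ C := by
    obtain ⟨Cφ, hCφ⟩ := hl0.bddAbove_range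
    refine ⟨Real.sqrt Cφ + ‖p0‖, by positivity, fun k => ?_⟩
    have h1 : ‖x k - p0‖ ^ 2 ≤ Cφ := hCφ (Set.mem_range_self k)
    have h2 : ‖x k - p0‖ ≤ Real.sqrt Cφ := by
      rw [show ‖x k - p0‖ = Real.sqrt (‖x k - p0‖ ^ 2) from
        (Real.sqrt_sq (norm_nonneg _)).symm]
      exact Real.sqrt_le_sqrt h1
    calc ‖x k‖ = ‖(x k - p0) + p0‖ := by rw [sub_add_cancel]
      _ ≤ ‖x k - p0‖ + ‖p0‖ := norm_add_le _ _
      _ ≤ _ := by linarith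
  -- residuals tend to zero
  have hTy : Tendsto (fun k => ‖T (y k) - y k‖) atTop (nhds 0) := by
    have h0 := htsum.tendsto_atTop_zero
    have h1 := (Real.continuous_sqrt.tendsto 0).comp h0
    rw [Real.sqrt_zero] at h1
    exact h1.congr fun k => by
      simp [Function.comp, Real.sqrt_sq (norm_nonneg _)]
  have hxy2 : Tendsto (fun k => ‖x (k + 2) - y k‖) atTop (nhds 0) := by
    apply squeeze_zero (fun k => norm_nonneg _) (g := fun k => ‖T (y k) - y k‖) _ hTy
    intro k
    have heq : x (k + 2) - y k = ρ k • (T (y k) - y k) := by rw [hx k]; module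
    rw [heq, norm_smul, Real.norm_eq_abs,
      abs_of_nonneg (le_of_lt (lt_of_lt_of_le hρlo (hρ k).1))]
    have : ρ k ≤ 1 := le_of_lt (lt_of_le_of_lt (hρ k).2 hρhi)
    nlinarith [norm_nonneg (T (y k) - y k)]
  have hTx2 : Tendsto (fun k => ‖T (x (k + 2)) - x (k + 2)‖) atTop (nhds 0) := by
    apply squeeze_zero (fun k => norm_nonneg _)
      (g := fun k => 2 * ‖x (k + 2) - y k‖ + ‖T (y k) - y k‖)
    · intro k
      calc ‖T (x (k + 2)) - x (k + 2)‖
          ≤ ‖T (x (k + 2)) - T (y k)‖ + ‖T (y k) - x (k + 2)‖ :=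
            norm_sub_le_norm_sub_add_norm_sub _ _ _
        _ ≤ ‖x (k + 2) - y k‖ + (‖T (y k) - y k‖ + ‖y k - x (k + 2)‖) :=
            add_le_add (hT _ _) (norm_sub_le_norm_sub_add_norm_sub _ _ _)
        _ = 2 * ‖x (k + 2) - y k‖ + ‖T (y k) - y k‖ := by
            rw [norm_sub_rev (y k) (x (k + 2))]; ring
    · simpa using (hxy2.const_mul 2).add hTy
  have hTx : Tendsto (fun k => ‖T (x k) - x k‖) atTop (nhds 0) :=
    (tendsto_add_atTop_iff_nat 2).mp hTx2
  -- weak cluster point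
  obtain ⟨z, φ₁, hφ₁, hzw⟩ := exists_weak_subseq x C hC
  have hzfix : T z = z := by
    apply demiclosed T hT (fun i => x (φ₁ i)) z (C + ‖z‖)
    · intro n
      calc ‖x (φ₁ n) - z‖ ≤ ‖x (φ₁ n)‖ + ‖z‖ := norm_sub_le _ _
        _ ≤ C + ‖z‖ := by linarith [hC (φ₁ n)]
    · exact hzw
    · exact hTx.comp hφ₁.tendsto_atTop
  refine ⟨z, hzfix, ?_⟩
  intro w
  by_contra hcon
  rw [Metric.tendsto_atTop] at hcon
  push_neg at hcon
  obtain ⟨ε, hε, hfreq⟩ := hcon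
  obtain ⟨ψ, hψ, hψbad⟩ :=
    Filter.extraction_of_frequently_atTop (Filter.frequently_atTop.mpr hfreq)
  obtain ⟨z', σ, hσ, hz'w⟩ := exists_weak_subseq (fun i => x (ψ i)) C (fun i => hC _)
  have hz'fix : T z' = z' := by
    apply demiclosed T hT (fun i => x (ψ (σ i))) z' (C + ‖z'‖)
    · intro n
      calc ‖x (ψ (σ n)) - z'‖ ≤ ‖x (ψ (σ n))‖ + ‖z'‖ := norm_sub_le _ _
        _ ≤ C + ‖z'‖ := by linarith [hC (ψ (σ n))]
    · exact fun w' => hz'w w'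
    · exact hTx.comp ((hψ.comp hσ).tendsto_atTop)
  have hzz' : z = z' :=
    cluster_unique x z z' (key z hzfix).1 (key z' hz'fix).1 φ₁ (ψ ∘ σ) hφ₁
      (hψ.comp hσ) hzw (fun w' => hz'w w')
  have hlim : Tendsto (fun i => (inner ℝ (x (ψ (σ i))) w : ℝ)) atTop (nhds (inner ℝ z w)) := by
    rw [hzz']
    exact hz'w w
  rw [Metric.tendsto_atTop] at hlim
  obtain ⟨N, hN⟩ := hlim ε hε
  exact absurd (hN N le_rfl) (not_lt.mpr (hψbad (σ N)))
end

section
/- Let T : H → H be nonexpansive with Fix(T) ≠ ∅. Suppose {αₖ} is nondecreasing with α₁ = 0, 0 ≤ αₖ ≤ α < 1, and there exist λ, σ, δ > 0 with δ > (α²(1+α) + ασ)/(1-α²) and 0 < λ ≤ λₖ ≤ (δ - α[α(1+α) + αδ + σ])/(δ[1 + α(1+α) + αδ + σ]). Define yᵏ = xᵏ + αₖ(xᵏ - xᵏ⁻¹) and xᵏ⁺¹ = (1-λₖ)yᵏ + λₖTyᵏ. Then ∑ₖ ‖xᵏ⁺¹ - xᵏ‖² < ∞ and {xᵏ} converges weakly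 to a point of Fix(T). -/
open RealInnerProductSpace Filter Finset

lemma combo_normsq {H : Type*} [NormedAddCommGroup H] [InnerProductSpace ℝ H]
    (u v : H) (l : ℝ) :
    ‖(1 - l) • u + l • v‖ ^ 2
      = (1 - l) * ‖u‖ ^ 2 + l * ‖v‖ ^ 2 - l * (1 - l) * ‖u - v‖ ^ 2 := by
  have h : ∀ a : H, ‖a‖ ^ 2 = ⟪a, a⟫ := fun a => (real_inner_self_eq_norm_sq a).symm
  simp only [h]
  simp only [inner_add_left, inner_add_right, inner_sub_left, inner_sub_right,
    real_inner_smul_left, real_inner_smul_right]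
  rw [real_inner_comm v u]
  ring

lemma stepB (ρ a δ K u v : ℝ) (ha : 0 ≤ a) (hδ : 0 < δ) (hρ : 0 ≤ ρ)
    (hK : K * (a * ρ + δ) ≤ ρ * δ) :
    K * u ^ 2 ≤ ρ * (u ^ 2 - 2 * a * u * v + a ^ 2 * v ^ 2) + a * δ * v ^ 2 := by
  have hpos : 0 < a * ρ + δ := by positivity
  nlinarith [mul_nonneg ha (sq_nonneg ((a * ρ + δ) * v - ρ * u)),
    mul_nonneg (sub_nonneg.2 hK) (sq_nonneg u), hpos, sq_nonneg u, sq_nonneg v]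

lemma stepA {H : Type*} [NormedAddCommGroup H] [InnerProductSpace ℝ H]
    (T : H → H) (hT : ∀ u v, ‖T u - T v‖ ≤ ‖u - v‖) (p : H) (hp : T p = p)
    (xk xk1 : H) (a l : ℝ) (_ha : 0 ≤ a) (hl0 : 0 < l) (_hl1 : l ≤ 1)
    (y x2 : H) (hy : y = xk1 + a • (xk1 - xk))
    (hx2 : x2 = (1 - l) • y + l • T y) :
    ‖x2 - p‖ ^ 2 + ((1 - l) / l) * ‖(x2 - xk1) - a • (xk1 - xk)‖ ^ 2
      ≤ (1 + a) * ‖xk1 - p‖ ^ 2 - a * ‖xk - p‖ ^ 2 + a * (1 + a) * ‖xk1 - xk‖ ^ 2 := by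
  have hyp : y - p = (1 - (-a)) • (xk1 - p) + (-a) • (xk - p) := by
    rw [hy]; module
  have hy2 : ‖y - p‖ ^ 2
      = (1 + a) * ‖xk1 - p‖ ^ 2 - a * ‖xk - p‖ ^ 2 + a * (1 + a) * ‖xk1 - xk‖ ^ 2 := by
    rw [hyp, combo_normsq]
    have h2 : (xk1 - p) - (xk - p) = xk1 - xk := by abel
    rw [h2]; ring
  have hx2p : x2 - p = (1 - l) • (y - p) + l • (T y - p) := by rw [hx2]; module
  have hx2sq : ‖x2 - p‖ ^ 2
      = (1 - l) * ‖y - p‖ ^ 2 + l * ‖T y - p‖ ^ 2 - l * (1 - l) * ‖y - T y‖ ^ 2 := by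
    rw [hx2p, combo_normsq]
    have h2 : (y - p) - (T y - p) = y - T y := by abel
    rw [h2]
  have hTyp : ‖T y - p‖ ≤ ‖y - p‖ := by
    have := hT y p; rwa [hp] at this
  have hTyp2 : ‖T y - p‖ ^ 2 ≤ ‖y - p‖ ^ 2 :=
    pow_le_pow_left₀ (norm_nonneg _) hTyp 2
  have hterm : (x2 - xk1) - a • (xk1 - xk) = x2 - y := by rw [hy]; abel
  have hx2y : x2 - y = l • (T y - y) := by rw [hx2]; module
  have hnx2y : ‖x2 - y‖ ^ 2 = l ^ 2 * ‖y - T y‖ ^ 2 := by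
    rw [hx2y, norm_smul, mul_pow, Real.norm_eq_abs, sq_abs, norm_sub_rev]
  have hfrac : ((1 - l) / l) * (l ^ 2 * ‖y - T y‖ ^ 2) = l * (1 - l) * ‖y - T y‖ ^ 2 := by
    field_simp
  rw [hterm, hnx2y, hfrac, hx2sq, hy2]
  nlinarith [mul_le_mul_of_nonneg_left hTyp2 hl0.le]


set_option maxHeartbeats 1000000 in
lemma inertialKM_weak_aux {H : Type*} [NormedAddCommGroup H]
    [InnerProductSpace ℝ H] [CompleteSpace H] (T : H → H) (hT : ∀ u v, ‖T u - T v‖ ≤ ‖u - v‖)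
    (x : ℕ → H) (abar : ℝ) (habar0 : 0 ≤ abar) (habar : abar < 1)
    (hsum2 : Summable (fun k => ‖x (k + 1) - x k‖ ^ 2))
    (hA2 : ∀ (k : ℕ) (p : H), T p = p →
      ‖x (k + 2) - p‖ ^ 2 - ‖x (k + 1) - p‖ ^ 2
        ≤ abar * max (‖x (k + 1) - p‖ ^ 2 - ‖x k - p‖ ^ 2) 0
          + abar * (1 + abar) * ‖x (k + 1) - x k‖ ^ 2)
    (hr : Tendsto (fun k => ‖x k - T (x k)‖) atTop (nhds 0))
    (R : ℝ) (hR : ∀ k, ‖x k‖ ≤ R) :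
    ∃ p : H, T p = p ∧ WeakTendsto x p := by
  -- limits of ‖x k - p‖² for fixed points p
  have hphilim : ∀ p : H, T p = p →
      ∃ L : ℝ, Tendsto (fun k => ‖x k - p‖ ^ 2) atTop (nhds L) := by
    intro p hp
    set θ : ℕ → ℝ := fun k => max (‖x (k + 1) - p‖ ^ 2 - ‖x k - p‖ ^ 2) 0 with hθdef
    have hθ0 : ∀ k, 0 ≤ θ k := fun k => le_max_right _ _
    have hθs : ∀ k, θ (k + 1) ≤ abar * θ k + abar * (1 + abar) * ‖x (k + 1) - x k‖ ^ 2 := by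
      intro k
      have h1 := hA2 k p hp
      simp only [hθdef]
      refine max_le (by linarith) ?_
      have h2 : (0:ℝ) ≤ ‖x (k + 1) - x k‖ ^ 2 := by positivity
      have h3 : (0:ℝ) ≤ max (‖x (k + 1) - p‖ ^ 2 - ‖x k - p‖ ^ 2) 0 := le_max_right _ _
      exact add_nonneg (mul_nonneg habar0 h3)
        (mul_nonneg (mul_nonneg habar0 (by linarith)) h2)
    have hcs : Summable (fun k => abar * (1 + abar) * ‖x (k + 1) - x k‖ ^ 2) :=
      hsum2.mul_left _
    set Cs : ℝ := ∑' k, abar * (1 + abar) * ‖x (k + 1) - x k‖ ^ 2 with hCsdef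
    have hc0 : ∀ k, (0:ℝ) ≤ abar * (1 + abar) * ‖x (k + 1) - x k‖ ^ 2 := by
      intro k; positivity
    have hCs0 : 0 ≤ Cs := tsum_nonneg hc0
    have hpart : ∀ n, ∑ k ∈ Finset.range n, θ k ≤ (θ 0 + Cs) / (1 - abar) := by
      intro n
      induction n with
      | zero =>
        simp only [Finset.range_zero, Finset.sum_empty]
        exact div_nonneg (by linarith [hθ0 0]) (by linarith)
      | succ n ih =>
        rw [Finset.sum_range_succ']
        have h1 : ∑ k ∈ Finset.range n, θ (k + 1)
            ≤ abar * (∑ k ∈ Finset.range n, θ k) + Cs := by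
          calc ∑ k ∈ Finset.range n, θ (k + 1)
              ≤ ∑ k ∈ Finset.range n,
                  (abar * θ k + abar * (1 + abar) * ‖x (k + 1) - x k‖ ^ 2) :=
                Finset.sum_le_sum fun k _ => hθs k
            _ = abar * (∑ k ∈ Finset.range n, θ k)
                  + ∑ k ∈ Finset.range n, abar * (1 + abar) * ‖x (k + 1) - x k‖ ^ 2 := by
                rw [Finset.sum_add_distrib, Finset.mul_sum]
            _ ≤ abar * (∑ k ∈ Finset.range n, θ k) + Cs := by
                have := hcs.sum_le_tsum (Finset.range n) (fun k _ => hc0 k)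
                linarith
        have h2 : abar * (∑ k ∈ Finset.range n, θ k) ≤ abar * ((θ 0 + Cs) / (1 - abar)) :=
          mul_le_mul_of_nonneg_left ih habar0
        have hB : (1 - abar) * ((θ 0 + Cs) / (1 - abar)) = θ 0 + Cs := by
          field_simp
          rw [mul_comm, mul_div_assoc, div_self (by linarith : (1:ℝ) - abar ≠ 0), mul_one]
        linarith
    have hθsum : Summable θ := summable_of_sum_range_le hθ0 hpart
    set t : ℕ → ℝ := fun n => ∑ k ∈ Finset.range n, θ k with htdef
    have htlim : Tendsto t atTop (nhds (∑' k, θ k)) := hθsum.hasSum.tendsto_sum_nat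
    have htle : ∀ n, t n ≤ ∑' k, θ k := fun n =>
      hθsum.sum_le_tsum (Finset.range n) (fun k _ => hθ0 k)
    have hψanti : Antitone (fun n => ‖x n - p‖ ^ 2 - t n) := by
      apply antitone_nat_of_succ_le
      intro n
      have h1 : t (n + 1) = t n + θ n := Finset.sum_range_succ θ n
      have h2 : ‖x (n + 1) - p‖ ^ 2 - ‖x n - p‖ ^ 2 ≤ θ n := le_max_left _ _
      simp only [h1]
      linarith
    have hψbdd : BddBelow (Set.range fun n => ‖x n - p‖ ^ 2 - t n) := by
      refine ⟨-∑' k, θ k, ?_⟩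
      rintro v ⟨n, rfl⟩
      have h1 : (0:ℝ) ≤ ‖x n - p‖ ^ 2 := by positivity
      have := htle n
      simp only []
      linarith
    have hψlim := tendsto_atTop_ciInf hψanti hψbdd
    refine ⟨(⨅ n, (‖x n - p‖ ^ 2 - t n)) + ∑' k, θ k, ?_⟩
    have := hψlim.add htlim
    simpa using this
  -- weak cluster points
  set Φ : ℕ → WeakDual ℝ H :=
    fun k => StrongDual.toWeakDual (InnerProductSpace.toDual ℝ H (x k)) with hΦdef
  have hΦw : ∀ k w, Φ k w = ⟪x k, w⟫ := by
    intro k w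
    simp only [hΦdef]
    exact InnerProductSpace.toDual_apply_apply
  have hcluster : ∀ F : Filter ℕ, F.NeBot → F ≤ atTop →
      ∃ (z : H) (G : Filter ℕ), G.NeBot ∧ G ≤ F ∧ T z = z ∧
        ∀ w : H, Tendsto (fun k => (⟪x k, w⟫ : ℝ)) G (nhds ⟪z, w⟫) := by
    intro F hF hFle
    have hcpt := WeakDual.isCompact_closedBall (𝕜 := ℝ) (E := H) 0 R
    haveI := hF
    have hle : Filter.map Φ F ≤
        Filter.principal (WeakDual.toStrongDual ⁻¹' Metric.closedBall 0 R) := by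
      rw [Filter.le_principal_iff]
      refine Filter.mem_map.2 (Filter.univ_mem' fun k => ?_)
      simp only [Set.mem_preimage, Metric.mem_closedBall, dist_zero_right, hΦdef]
      show ‖(InnerProductSpace.toDual ℝ H (x k) : StrongDual ℝ H)‖ ≤ R
      rw [LinearIsometryEquiv.norm_map]
      exact hR k
    obtain ⟨aW, _haS, hclust⟩ := hcpt hle
    have hG : (Filter.comap Φ (nhds aW) ⊓ F).NeBot := by
      rw [← Filter.map_neBot_iff Φ, Filter.push_pull']
      exact hclust
    set G := Filter.comap Φ (nhds aW) ⊓ F with hGdef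
    set z : H := (InnerProductSpace.toDual ℝ H).symm (WeakDual.toStrongDual aW) with hzdef
    have haw : ∀ w, aW w = ⟪z, w⟫ := by
      intro w
      have h1 : InnerProductSpace.toDual ℝ H z = WeakDual.toStrongDual aW :=
        (InnerProductSpace.toDual ℝ H).apply_symm_apply _
      have h2 : (⟪z, w⟫ : ℝ) = InnerProductSpace.toDual ℝ H z w :=
        InnerProductSpace.toDual_apply_apply.symm
      rw [h2, h1]
      rfl
    have hTend : ∀ w : H, Tendsto (fun k => (⟪x k, w⟫ : ℝ)) G (nhds ⟪z, w⟫) := by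
      intro w
      have h1 : Tendsto Φ G (nhds aW) := tendsto_comap.mono_left inf_le_left
      have h2 := ((WeakDual.eval_continuous w).tendsto aW).comp h1
      have h3 : (fun k => Φ k w) = fun k => (⟪x k, w⟫ : ℝ) := funext fun k => hΦw k w
      rw [← haw w, ← h3]
      exact h2
    haveI hGne : G.NeBot := hG
    have hGle : G ≤ atTop := le_trans inf_le_right hFle
    -- demiclosedness: T z = z
    have hq : ∀ k, ‖x k - T z‖ ^ 2 - ‖x k - z‖ ^ 2
        = 2 * ⟪x k, z - T z⟫ + ‖T z‖ ^ 2 - ‖z‖ ^ 2 := by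
      intro k
      rw [norm_sub_sq_real (x k) (T z), norm_sub_sq_real (x k) z, inner_sub_right]
      ring
    have hqt : Tendsto (fun k => ‖x k - T z‖ ^ 2 - ‖x k - z‖ ^ 2) G
        (nhds (‖z - T z‖ ^ 2)) := by
      have h1 : Tendsto (fun k => 2 * (⟪x k, z - T z⟫ : ℝ) + ‖T z‖ ^ 2 - ‖z‖ ^ 2) G
          (nhds (2 * ⟪z, z - T z⟫ + ‖T z‖ ^ 2 - ‖z‖ ^ 2)) := by
        exact (((hTend (z - T z)).const_mul 2).add_const _).sub_const _
      have h2 : 2 * (⟪z, z - T z⟫ : ℝ) + ‖T z‖ ^ 2 - ‖z‖ ^ 2 = ‖z - T z‖ ^ 2 := by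
        rw [norm_sub_sq_real z (T z), inner_sub_right, real_inner_self_eq_norm_sq,
          real_inner_comm]
        ring
      rw [← h2]
      exact h1.congr fun k => by rw [← hq k]
    have hqb : ∀ k, ‖x k - T z‖ ^ 2 - ‖x k - z‖ ^ 2
        ≤ ‖x k - T (x k)‖ ^ 2 + 2 * ‖x k - T (x k)‖ * (R + ‖z‖) := by
      intro k
      have h1 : ‖x k - T z‖ ≤ ‖x k - T (x k)‖ + ‖x k - z‖ := by
        calc ‖x k - T z‖ ≤ ‖x k - T (x k)‖ + ‖T (x k) - T z‖ := by
              have := norm_sub_le_norm_sub_add_norm_sub (x k) (T (x k)) (T z)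
              linarith [norm_sub_le (x k - T (x k)) (T z - T (x k))]
          _ ≤ ‖x k - T (x k)‖ + ‖x k - z‖ := by linarith [hT (x k) z]
      have h2 : ‖x k - z‖ ≤ R + ‖z‖ := le_trans (norm_sub_le _ _) (by linarith [hR k])
      have h3 : ‖x k - T z‖ ^ 2 ≤ (‖x k - T (x k)‖ + ‖x k - z‖) ^ 2 :=
        pow_le_pow_left₀ (norm_nonneg _) h1 2
      nlinarith [norm_nonneg (x k - T (x k)), norm_nonneg (x k - z)]
    have hb0 : Tendsto (fun k => ‖x k - T (x k)‖ ^ 2 + 2 * ‖x k - T (x k)‖ * (R + ‖z‖))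
        atTop (nhds 0) := by
      have h1 : Tendsto (fun k => ‖x k - T (x k)‖ ^ 2) atTop (nhds 0) := by
        have := hr.mul hr
        simpa [pow_two] using this
      have h2 : Tendsto (fun k => 2 * ‖x k - T (x k)‖ * (R + ‖z‖)) atTop (nhds 0) := by
        have := (hr.const_mul 2).mul_const (R + ‖z‖)
        simpa using this
      simpa using h1.add h2
    have hz2 : ‖z - T z‖ ^ 2 ≤ 0 :=
      le_of_tendsto_of_tendsto' hqt (hb0.mono_left hGle) hqb
    have hTz : T z = z := by
      have h1 : ‖z - T z‖ ^ 2 = 0 := le_antisymm hz2 (by positivity)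
      have h2 : z - T z = 0 := by
        rwa [pow_eq_zero_iff (by norm_num), norm_eq_zero] at h1
      have := sub_eq_zero.1 h2
      exact this.symm
    exact ⟨z, G, hG, inf_le_right, hTz, hTend⟩
  -- uniqueness of weak cluster points
  have huniq : ∀ (z₁ z₂ : H) (G₁ G₂ : Filter ℕ), G₁.NeBot → G₂.NeBot →
      G₁ ≤ atTop → G₂ ≤ atTop → T z₁ = z₁ → T z₂ = z₂ →
      (∀ w : H, Tendsto (fun k => (⟪x k, w⟫ : ℝ)) G₁ (nhds ⟪z₁, w⟫)) →
      (∀ w : H, Tendsto (fun k => (⟪x k, w⟫ : ℝ)) G₂ (nhds ⟪z₂, w⟫)) →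
      z₁ = z₂ := by
    intro z₁ z₂ G₁ G₂ hG₁ hG₂ hG₁le hG₂le hz₁ hz₂ hT₁ hT₂
    obtain ⟨L₁, hL₁⟩ := hphilim z₁ hz₁
    obtain ⟨L₂, hL₂⟩ := hphilim z₂ hz₂
    have hq : ∀ k, (⟪x k, z₁ - z₂⟫ : ℝ)
        = (‖x k - z₂‖ ^ 2 - ‖x k - z₁‖ ^ 2 - ‖z₂‖ ^ 2 + ‖z₁‖ ^ 2) / 2 := by
      intro k
      rw [inner_sub_right, norm_sub_sq_real (x k) z₂, norm_sub_sq_real (x k) z₁]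
      ring
    have hct : Tendsto (fun k => (⟪x k, z₁ - z₂⟫ : ℝ)) atTop
        (nhds ((L₂ - L₁ - ‖z₂‖ ^ 2 + ‖z₁‖ ^ 2) / 2)) := by
      have h1 := (((hL₂.sub hL₁).sub_const (‖z₂‖ ^ 2)).add_const (‖z₁‖ ^ 2)).div_const 2
      exact h1.congr fun k => (hq k).symm
    haveI := hG₁; haveI := hG₂
    have h1 : (⟪z₁, z₁ - z₂⟫ : ℝ) = (L₂ - L₁ - ‖z₂‖ ^ 2 + ‖z₁‖ ^ 2) / 2 :=
      tendsto_nhds_unique (hT₁ (z₁ - z₂)) (hct.mono_left hG₁le)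
    have h2 : (⟪z₂, z₁ - z₂⟫ : ℝ) = (L₂ - L₁ - ‖z₂‖ ^ 2 + ‖z₁‖ ^ 2) / 2 :=
      tendsto_nhds_unique (hT₂ (z₁ - z₂)) (hct.mono_left hG₂le)
    have h3 : (⟪z₁ - z₂, z₁ - z₂⟫ : ℝ) = 0 := by
      rw [inner_sub_left]
      rw [h1, h2]
      ring
    have h4 : z₁ - z₂ = 0 := inner_self_eq_zero.1 h3
    exact sub_eq_zero.1 h4
  -- final assembly
  obtain ⟨z, G, hGne, hGle, hTz, hTendG⟩ := hcluster atTop atTop_neBot le_rfl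
  refine ⟨z, hTz, ?_⟩
  intro w
  show Tendsto (fun n => (⟪x n, w⟫ : ℝ)) atTop (nhds ⟪z, w⟫)
  by_contra hcon
  rw [Metric.tendsto_atTop] at hcon
  push_neg at hcon
  obtain ⟨ε, hε, hfreq⟩ := hcon
  have hfreq' : ∃ᶠ n in atTop, ε ≤ dist (⟪x n, w⟫ : ℝ) ⟪z, w⟫ := by
    rw [frequently_atTop]
    intro a
    obtain ⟨n, hn, hd⟩ := hfreq a
    exact ⟨n, hn, hd⟩
  have hF' : (atTop ⊓ Filter.principal {n | ε ≤ dist (⟪x n, w⟫ : ℝ) ⟪z, w⟫}).NeBot :=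
    Filter.frequently_iff_neBot.1 hfreq'
  obtain ⟨z', G', hG'ne, hG'le, hTz', hTend'⟩ := hcluster _ hF' inf_le_left
  have hzz : z' = z := huniq z' z G' G hG'ne hGne
    (hG'le.trans inf_le_left) hGle hTz' hTz hTend' hTendG
  rw [hzz] at hTend'
  haveI := hG'ne
  have hdist : Tendsto (fun k => dist (⟪x k, w⟫ : ℝ) ⟪z, w⟫) G' (nhds 0) := by
    have h2 : Tendsto (fun _ : ℕ => (⟪z, w⟫ : ℝ)) G' (nhds ⟪z, w⟫) := tendsto_const_nhds
    have := (hTend' w).dist h2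
    simpa using this
  have hmem : {n | ε ≤ dist (⟪x n, w⟫ : ℝ) ⟪z, w⟫} ∈ G' :=
    Filter.le_principal_iff.1 (hG'le.trans inf_le_right)
  have : ε ≤ 0 := ge_of_tendsto hdist hmem
  linarith


set_option maxHeartbeats 2000000 in
/-- Boţ et al.'s convergence theorem for the inertial Krasnoselskii–Mann iteration.
Here `x 0` plays the role of `x⁻¹` and `x 1` of `x⁰`; the index of `α, λ` starts at 1. -/
theorem inertial_KM_convergence_Bot
    {H : Type*} [NormedAddCommGroup H] [InnerProductSpace ℝ H] [CompleteSpace H]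
    (T : H → H) (hT : ∀ u v, ‖T u - T v‖ ≤ ‖u - v‖)
    (hFix : ∃ p : H, T p = p)
    (α lam : ℕ → ℝ) (abar lamlo σ δ : ℝ)
    (hαmono : ∀ k, α k ≤ α (k + 1)) (hα1 : α 1 = 0)
    (hα : ∀ k, 0 ≤ α k ∧ α k ≤ abar) (habar : abar < 1)
    (hlamlo : 0 < lamlo) (hσ : 0 < σ) (hδ : 0 < δ)
    (hδbig : δ > (abar ^ 2 * (1 + abar) + abar * σ) / (1 - abar ^ 2))
    (hlam : ∀ k, lamlo ≤ lam k ∧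
      lam k ≤ (δ - abar * (abar * (1 + abar) + abar * δ + σ)) /
        (δ * (1 + abar * (1 + abar) + abar * δ + σ)))
    (x y : ℕ → H)
    (hy : ∀ k, y k = x (k + 1) + α (k + 1) • (x (k + 1) - x k))
    (hx : ∀ k, x (k + 2) = (1 - lam (k + 1)) • y k + lam (k + 1) • T (y k)) :
    Summable (fun k => ‖x (k + 1) - x k‖ ^ 2) ∧
    ∃ p : H, T p = p ∧ WeakTendsto x p := by
  obtain ⟨p₀, hp₀⟩ := hFix
  have habar0 : 0 ≤ abar := le_trans (hα 0).1 (hα 0).2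
  have habar2 : 0 < 1 - abar ^ 2 := by nlinarith
  set A : ℝ := abar * (1 + abar) + abar * δ + σ with hAdef
  have hσA : σ ≤ A := by nlinarith
  have hA0 : 0 < A := lt_of_lt_of_le hσ hσA
  have hδbig' : abar * A < δ := by
    rw [gt_iff_lt, div_lt_iff₀ habar2] at hδbig
    nlinarith
  have hlampos : ∀ k, 0 < lam k := fun k => lt_of_lt_of_le hlamlo (hlam k).1
  have hlammax : ∀ k, lam k * (δ * (1 + A)) ≤ δ - abar * A := by
    intro k
    have h2 := (hlam k).2
    have hd : 0 < δ * (1 + A) := by positivity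
    have he : δ * (1 + abar * (1 + abar) + abar * δ + σ) = δ * (1 + A) := by
      rw [hAdef]; ring
    rw [he, le_div_iff₀ hd] at h2
    exact h2
  have hlam1 : ∀ k, lam k ≤ 1 := by
    intro k
    have h1 := hlammax k
    have h2 := hlampos k
    nlinarith [mul_nonneg habar0 hA0.le, mul_pos hδ hA0]
  set ρ : ℕ → ℝ := fun k => (1 - lam (k + 1)) / lam (k + 1) with hρdef
  have hρ0 : ∀ k, 0 ≤ ρ k := fun k =>
    div_nonneg (by linarith [hlam1 (k + 1)]) (hlampos (k + 1)).le
  have hρlow : ∀ k, A * δ ≤ ρ k * (δ - abar * A) := by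
    intro k
    have hl := hlampos (k + 1)
    have hm := hlammax (k + 1)
    rw [hρdef]
    rw [div_mul_eq_mul_div, le_div_iff₀ hl]
    nlinarith [mul_nonneg (mul_nonneg habar0 hA0.le) hl.le]
  have hparam : ∀ k,
      (α (k + 2) * (1 + α (k + 2)) + α (k + 2) * δ + σ) * (α (k + 1) * ρ k + δ) ≤ ρ k * δ := by
    intro k
    have h1 : α (k + 2) * (1 + α (k + 2)) + α (k + 2) * δ + σ ≤ A := by
      have h := hα (k + 2); nlinarith [h.1, h.2]
    have ha1 := hα (k + 1)
    have hρk := hρ0 k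
    have hρl := hρlow k
    have hd : (0:ℝ) < α (k + 1) * ρ k + δ := by nlinarith [mul_nonneg (hα (k + 1)).1 (hρ0 k)]
    have hK0 : (0:ℝ) ≤ α (k + 2) * (1 + α (k + 2)) + α (k + 2) * δ + σ := by
      have h := hα (k + 2); nlinarith [h.1]
    nlinarith [mul_le_mul_of_nonneg_right h1 hd.le,
      mul_nonneg (mul_nonneg hA0.le (sub_nonneg.2 ha1.2)) hρk]
  have hA' : ∀ (k : ℕ) (p : H), T p = p →
      ‖x (k + 2) - p‖ ^ 2
          + ρ k * ‖(x (k + 2) - x (k + 1)) - α (k + 1) • (x (k + 1) - x k)‖ ^ 2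
        ≤ (1 + α (k + 1)) * ‖x (k + 1) - p‖ ^ 2 - α (k + 1) * ‖x k - p‖ ^ 2
          + α (k + 1) * (1 + α (k + 1)) * ‖x (k + 1) - x k‖ ^ 2 := by
    intro k p hp
    exact stepA T hT p hp (x k) (x (k + 1)) (α (k + 1)) (lam (k + 1)) (hα (k + 1)).1
      (hlampos (k + 1)) (hlam1 (k + 1)) (y k) (x (k + 2)) (hy k) (hx k)
  have hip : ∀ k,
      ‖x (k + 2) - x (k + 1)‖ ^ 2
          - 2 * α (k + 1) * ‖x (k + 2) - x (k + 1)‖ * ‖x (k + 1) - x k‖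
          + α (k + 1) ^ 2 * ‖x (k + 1) - x k‖ ^ 2
        ≤ ‖(x (k + 2) - x (k + 1)) - α (k + 1) • (x (k + 1) - x k)‖ ^ 2 := by
    intro k
    have hns := norm_sub_sq_real (x (k + 2) - x (k + 1)) (α (k + 1) • (x (k + 1) - x k))
    rw [real_inner_smul_right, norm_smul, Real.norm_eq_abs] at hns
    have hCS := real_inner_le_norm (x (k + 2) - x (k + 1)) (x (k + 1) - x k)
    have ha := (hα (k + 1)).1
    nlinarith [abs_nonneg (α (k + 1)), sq_abs (α (k + 1)), le_abs_self (α (k + 1)),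
      norm_nonneg (x (k + 2) - x (k + 1)), norm_nonneg (x (k + 1) - x k),
      mul_le_mul_of_nonneg_left hCS (mul_nonneg (by norm_num : (0:ℝ) ≤ 2) ha)]
  -- the energy descent
  set μ : ℕ → ℝ := fun k => ‖x (k + 1) - p₀‖ ^ 2 - α (k + 1) * ‖x k - p₀‖ ^ 2
      + (α (k + 1) * (1 + α (k + 1)) + α (k + 1) * δ) * ‖x (k + 1) - x k‖ ^ 2 with hμdef
  have hμ : ∀ k, μ (k + 1) + σ * ‖x (k + 2) - x (k + 1)‖ ^ 2 ≤ μ k := by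
    intro k
    have h1 := hA' k p₀ hp₀
    have h2 := hip k
    have h3 := stepB (ρ k) (α (k + 1)) δ
      (α (k + 2) * (1 + α (k + 2)) + α (k + 2) * δ + σ)
      ‖x (k + 2) - x (k + 1)‖ ‖x (k + 1) - x k‖ (hα (k + 1)).1 hδ (hρ0 k) (hparam k)
    have h4 := mul_le_mul_of_nonneg_left h2 (hρ0 k)
    have h5 := hαmono (k + 1)
    have h6 : (0:ℝ) ≤ ‖x (k + 1) - p₀‖ ^ 2 := by positivity
    have h7 := mul_le_mul_of_nonneg_right h5 h6
    simp only [hμdef]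
    linarith [h1, h3, h4, h7]
  have hμanti : Antitone μ := antitone_nat_of_succ_le fun k => by
    nlinarith [hμ k, sq_nonneg ‖x (k + 2) - x (k + 1)‖, hσ.le]
  set C : ℝ := max (‖x 0 - p₀‖ ^ 2) (max (μ 0) 0 / (1 - abar)) with hCdef
  have hC0 : 0 ≤ C := le_trans (by positivity) (le_max_left _ _)
  have hCge : max (μ 0) 0 ≤ (1 - abar) * C := by
    have h1 : max (μ 0) 0 / (1 - abar) ≤ C := le_max_right _ _
    rw [div_le_iff₀ (by linarith)] at h1
    linarith [h1]
  have hC : ∀ k, ‖x k - p₀‖ ^ 2 ≤ C := by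
    intro k
    induction k with
    | zero => exact le_max_left _ _
    | succ k ih =>
      have h1 : μ k ≤ μ 0 := hμanti (Nat.zero_le k)
      have h2 : (0:ℝ) ≤ (α (k + 1) * (1 + α (k + 1)) + α (k + 1) * δ) * ‖x (k + 1) - x k‖ ^ 2 := by
        have hh := (hα (k + 1)).1
        have h3 : (0:ℝ) ≤ ‖x (k + 1) - x k‖ ^ 2 := by positivity
        exact mul_nonneg (add_nonneg (mul_nonneg hh (by linarith)) (mul_nonneg hh hδ.le)) h3
      have h4 : α (k + 1) * ‖x k - p₀‖ ^ 2 ≤ abar * C := by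
        have := (hα (k + 1))
        have h5 : (0:ℝ) ≤ ‖x k - p₀‖ ^ 2 := by positivity
        nlinarith
      have h6 : μ 0 ≤ max (μ 0) 0 := le_max_left _ _
      have h1' : ‖x (k + 1) - p₀‖ ^ 2 - α (k + 1) * ‖x k - p₀‖ ^ 2
          + (α (k + 1) * (1 + α (k + 1)) + α (k + 1) * δ) * ‖x (k + 1) - x k‖ ^ 2 ≤ μ 0 := h1
      linarith [hCge]
  have hμlb : ∀ k, -(abar * C) ≤ μ k := by
    intro k
    have h2 : (0:ℝ) ≤ (α (k + 1) * (1 + α (k + 1)) + α (k + 1) * δ) * ‖x (k + 1) - x k‖ ^ 2 := by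
      have hh := (hα (k + 1)).1
      have h3 : (0:ℝ) ≤ ‖x (k + 1) - x k‖ ^ 2 := by positivity
      exact mul_nonneg (add_nonneg (mul_nonneg hh (by linarith)) (mul_nonneg hh hδ.le)) h3
    have h4 : α (k + 1) * ‖x k - p₀‖ ^ 2 ≤ abar * C := by
      have := (hα (k + 1))
      have h5 : (0:ℝ) ≤ ‖x k - p₀‖ ^ 2 := by positivity
      nlinarith [hC k]
    have h6 : (0:ℝ) ≤ ‖x (k + 1) - p₀‖ ^ 2 := by positivity
    simp only [hμdef]
    nlinarith
  have hsum1 : ∀ n, ∑ k ∈ Finset.range n, σ * ‖x (k + 2) - x (k + 1)‖ ^ 2 ≤ μ 0 - μ n := by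
    intro n
    induction n with
    | zero => simp
    | succ n ih =>
      rw [Finset.sum_range_succ]
      have := hμ n
      linarith
  have hsum2 : Summable (fun k => ‖x (k + 1) - x k‖ ^ 2) := by
    rw [← summable_nat_add_iff 1]
    apply summable_of_sum_range_le (c := (μ 0 + abar * C) / σ)
      (fun n => by positivity)
    intro n
    rw [le_div_iff₀ hσ]
    have h1 := hsum1 n
    have h2 := hμlb n
    have h3 : (∑ k ∈ Finset.range n, ‖x (k + 1 + 1) - x (k + 1)‖ ^ 2) * σ
        = ∑ k ∈ Finset.range n, σ * ‖x (k + 2) - x (k + 1)‖ ^ 2 := by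
      rw [Finset.sum_mul]
      refine Finset.sum_congr rfl fun i _ => ?_
      show ‖x (i + 2) - x (i + 1)‖ ^ 2 * σ = σ * ‖x (i + 2) - x (i + 1)‖ ^ 2
      ring
    linarith
  -- interface facts for part 2
  have hA2 : ∀ (k : ℕ) (p : H), T p = p →
      ‖x (k + 2) - p‖ ^ 2 - ‖x (k + 1) - p‖ ^ 2
        ≤ abar * max (‖x (k + 1) - p‖ ^ 2 - ‖x k - p‖ ^ 2) 0
          + abar * (1 + abar) * ‖x (k + 1) - x k‖ ^ 2 := by
    intro k p hp
    have h1 := hA' k p hp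
    have h2 : (0:ℝ) ≤ ρ k * ‖(x (k + 2) - x (k + 1)) - α (k + 1) • (x (k + 1) - x k)‖ ^ 2 :=
      mul_nonneg (hρ0 k) (by positivity)
    have ha := hα (k + 1)
    have h3 : α (k + 1) * (‖x (k + 1) - p‖ ^ 2 - ‖x k - p‖ ^ 2)
        ≤ abar * max (‖x (k + 1) - p‖ ^ 2 - ‖x k - p‖ ^ 2) 0 := by
      have h4 : α (k + 1) * (‖x (k + 1) - p‖ ^ 2 - ‖x k - p‖ ^ 2)
          ≤ α (k + 1) * max (‖x (k + 1) - p‖ ^ 2 - ‖x k - p‖ ^ 2) 0 :=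
        mul_le_mul_of_nonneg_left (le_max_left _ _) ha.1
      have h5 : α (k + 1) * max (‖x (k + 1) - p‖ ^ 2 - ‖x k - p‖ ^ 2) 0
          ≤ abar * max (‖x (k + 1) - p‖ ^ 2 - ‖x k - p‖ ^ 2) 0 :=
        mul_le_mul_of_nonneg_right ha.2 (le_max_right _ _)
      linarith
    have h6 : α (k + 1) * (1 + α (k + 1)) * ‖x (k + 1) - x k‖ ^ 2
        ≤ abar * (1 + abar) * ‖x (k + 1) - x k‖ ^ 2 := by
      have h7 : (0:ℝ) ≤ ‖x (k + 1) - x k‖ ^ 2 := by positivity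
      have hcoef : α (k + 1) * (1 + α (k + 1)) ≤ abar * (1 + abar) := by
        nlinarith [mul_nonneg (sub_nonneg.2 ha.2)
          (by linarith [ha.1] : (0:ℝ) ≤ 1 + abar + α (k + 1))]
      exact mul_le_mul_of_nonneg_right hcoef h7
    nlinarith [h1, h2, h3, h6]
  have hΔ0 : Tendsto (fun k => ‖x (k + 1) - x k‖) atTop (nhds 0) := by
    have h1 := hsum2.tendsto_atTop_zero
    have h2 := (Real.continuous_sqrt.tendsto' 0 0 Real.sqrt_zero).comp h1
    refine h2.congr fun k => ?_
    exact Real.sqrt_sq (norm_nonneg _)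
  have hr : Tendsto (fun k => ‖x k - T (x k)‖) atTop (nhds 0) := by
    have hyx : ∀ k, ‖y k - x (k + 1)‖ ≤ abar * ‖x (k + 1) - x k‖ := by
      intro k
      have h1 : y k - x (k + 1) = α (k + 1) • (x (k + 1) - x k) := by
        rw [hy k]; abel
      rw [h1, norm_smul, Real.norm_eq_abs, abs_of_nonneg (hα (k + 1)).1]
      exact mul_le_mul_of_nonneg_right (hα (k + 1)).2 (norm_nonneg _)
    have hyT : ∀ k, ‖y k - T (y k)‖
        ≤ (‖x (k + 2) - x (k + 1)‖ + abar * ‖x (k + 1) - x k‖) / lamlo := by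
      intro k
      have h1 : x (k + 2) - y k = lam (k + 1) • (T (y k) - y k) := by
        rw [hx k]; module
      have h2 : ‖x (k + 2) - y k‖ = lam (k + 1) * ‖y k - T (y k)‖ := by
        rw [h1, norm_smul, Real.norm_eq_abs, abs_of_pos (hlampos (k + 1)), norm_sub_rev]
      have h3 : ‖x (k + 2) - y k‖ ≤ ‖x (k + 2) - x (k + 1)‖ + abar * ‖x (k + 1) - x k‖ := by
        calc ‖x (k + 2) - y k‖ ≤ ‖x (k + 2) - x (k + 1)‖ + ‖x (k + 1) - y k‖ :=
              norm_sub_le_norm_sub_add_norm_sub _ _ _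
          _ ≤ ‖x (k + 2) - x (k + 1)‖ + abar * ‖x (k + 1) - x k‖ := by
              have h4 := hyx k
              rw [norm_sub_rev (y k) (x (k + 1))] at h4
              linarith
      rw [le_div_iff₀ hlamlo]
      calc ‖y k - T (y k)‖ * lamlo ≤ ‖y k - T (y k)‖ * lam (k + 1) :=
            mul_le_mul_of_nonneg_left (hlam (k + 1)).1 (norm_nonneg _)
        _ = lam (k + 1) * ‖y k - T (y k)‖ := mul_comm _ _
        _ = ‖x (k + 2) - y k‖ := h2.symm
        _ ≤ _ := h3
    have hb : ∀ k, ‖x (k + 1) - T (x (k + 1))‖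
        ≤ 2 * (abar * ‖x (k + 1) - x k‖)
          + (‖x (k + 2) - x (k + 1)‖ + abar * ‖x (k + 1) - x k‖) / lamlo := by
      intro k
      have h1 : ‖x (k + 1) - T (x (k + 1))‖
          ≤ ‖x (k + 1) - y k‖ + ‖y k - T (y k)‖ + ‖T (y k) - T (x (k + 1))‖ := by
        have t1 := norm_sub_le_norm_sub_add_norm_sub (x (k + 1)) (y k) (T (x (k + 1)))
        have t2 := norm_sub_le_norm_sub_add_norm_sub (y k) (T (y k)) (T (x (k + 1)))
        linarith
      have h2 : ‖T (y k) - T (x (k + 1))‖ ≤ ‖y k - x (k + 1)‖ := hT _ _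
      have h3 : ‖x (k + 1) - y k‖ = ‖y k - x (k + 1)‖ := norm_sub_rev _ _
      have h4 := hyx k
      have h5 := hyT k
      linarith
    have hshift : Tendsto (fun k => ‖x (k + 2) - x (k + 1)‖) atTop (nhds 0) := by
      have := (tendsto_add_atTop_iff_nat 1).2 hΔ0
      exact this.congr fun k => rfl
    have hblim : Tendsto (fun k => 2 * (abar * ‖x (k + 1) - x k‖)
        + (‖x (k + 2) - x (k + 1)‖ + abar * ‖x (k + 1) - x k‖) / lamlo) atTop (nhds 0) := by
      have h1 := (hΔ0.const_mul abar).const_mul 2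
      have h2 := ((hshift.add (hΔ0.const_mul abar)).div_const lamlo)
      have h3 := h1.add h2
      simpa using h3
    have hsq : Tendsto (fun k => ‖x (k + 1) - T (x (k + 1))‖) atTop (nhds 0) :=
      squeeze_zero (fun k => norm_nonneg _) hb hblim
    exact (tendsto_add_atTop_iff_nat 1).1 hsq
  have hR : ∀ k, ‖x k‖ ≤ Real.sqrt C + ‖p₀‖ := by
    intro k
    have h1 : ‖x k - p₀‖ = Real.sqrt (‖x k - p₀‖ ^ 2) := (Real.sqrt_sq (norm_nonneg _)).symm
    have h2 : ‖x k - p₀‖ ≤ Real.sqrt C := by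
      rw [h1]
      exact Real.sqrt_le_sqrt (hC k)
    calc ‖x k‖ = ‖x k - p₀ + p₀‖ := by rw [sub_add_cancel]
      _ ≤ ‖x k - p₀‖ + ‖p₀‖ := norm_add_le _ _
      _ ≤ Real.sqrt C + ‖p₀‖ := by linarith
  exact ⟨hsum2, inertialKM_weak_aux T hT x abar habar0 habar hsum2 hA2 hr _ hR⟩
end

section
/- Let A, B : H → H be maximally monotone (possibly set-valued), C : H → H β-cocoercive, γ > 0, and define T = J_{γB} composed suitably: T = I - J_{γB} + J_{γA}(2J_{γB} - I - γC∘J_{γB}). Then zer(A + B + C) = J_{γB}(Fix(T)). -/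
/-- A set-valued operator is maximally monotone. -/
def IsMaximalMonotone {H : Type*} [NormedAddCommGroup H] [InnerProductSpace ℝ H]
    (A : H → Set H) : Prop :=
  (∀ x y u v, u ∈ A x → v ∈ A y → 0 ≤ (inner ℝ (x - y) (u - v) : ℝ)) ∧
  (∀ x u, (∀ y v, v ∈ A y → 0 ≤ (inner ℝ (x - y) (u - v) : ℝ)) → u ∈ A x)

/-- Resolvent identity: if `A` is monotone and `J` satisfies the resolvent
relation for `γA`, then `J (x + γ • a) = x` whenever `a ∈ A x`. -/
lemma resolvent_eq_of_mem {H : Type*} [NormedAddCommGroup H] [InnerProductSpace ℝ H]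
    (A : H → Set H)
    (mono : ∀ x y u v, u ∈ A x → v ∈ A y → 0 ≤ (inner ℝ (x - y) (u - v) : ℝ))
    (γ : ℝ) (hγ : 0 < γ) (J : H → H)
    (hJ : ∀ u : H, γ⁻¹ • (u - J u) ∈ A (J u))
    (x a : H) (ha : a ∈ A x) : J (x + γ • a) = x := by
  set y := J (x + γ • a) with hy
  have hmono := mono x y a (γ⁻¹ • (x + γ • a - y)) ha (hJ (x + γ • a))
  have hrw : a - γ⁻¹ • (x + γ • a - y) = γ⁻¹ • (y - x) := by
    have hγγ : γ⁻¹ * γ = 1 := inv_mul_cancel₀ hγ.ne'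
    match_scalars <;> simp [hγγ] <;> ring
  rw [hrw] at hmono
  have hin : (inner ℝ (x - y) (γ⁻¹ • (y - x)) : ℝ) = -(γ⁻¹ * ‖x - y‖ ^ 2) := by
    rw [real_inner_smul_right]
    have : (y - x) = -(x - y) := by abel
    rw [this, inner_neg_right, real_inner_self_eq_norm_sq]
    ring
  rw [hin] at hmono
  have hpos : 0 < γ⁻¹ := inv_pos.mpr hγ
  have : ‖x - y‖ ^ 2 ≤ 0 := by nlinarith
  have : x - y = 0 := by
    have := sq_nonneg ‖x - y‖
    have hn : ‖x - y‖ ^ 2 = 0 := le_antisymm ‹_› ‹_›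
    simpa [pow_eq_zero_iff] using hn
  have : x = y := by rwa [sub_eq_zero] at this
  exact this.symm

/-- Davis–Yin: zer(A+B+C) = J_{γB}(Fix T) where
`T = I - J_{γB} + J_{γA}∘(2 J_{γB} - I - γ C ∘ J_{γB})`.  The resolvents are given
as functions `JA, JB` characterized by the resolvent relation. -/
theorem davis_yin_zeros_eq_image_of_fixedPoints
    {H : Type*} [NormedAddCommGroup H] [InnerProductSpace ℝ H]
    (A B : H → Set H) (hA : IsMaximalMonotone A) (hB : IsMaximalMonotone B)
    (C : H → H) (β : ℝ) (hβ : 0 < β)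
    (hC : ∀ x y : H, β * ‖C x - C y‖ ^ 2 ≤ (inner ℝ (x - y) (C x - C y) : ℝ))
    (γ : ℝ) (hγ : 0 < γ)
    (JA JB : H → H)
    (hJA : ∀ u : H, γ⁻¹ • (u - JA u) ∈ A (JA u))
    (hJB : ∀ u : H, γ⁻¹ • (u - JB u) ∈ B (JB u))
    (T : H → H)
    (hT : ∀ z : H, T z = z - JB z + JA ((2 : ℝ) • JB z - z - γ • C (JB z))) :
    {x : H | ∃ a ∈ A x, ∃ b ∈ B x, a + b + C x = 0} = JB '' {z : H | T z = z} := by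
  have hγγ : γ⁻¹ * γ = 1 := inv_mul_cancel₀ hγ.ne'
  ext x
  constructor
  · rintro ⟨a, ha, b, hb, hsum⟩
    set z := x + γ • b with hz
    have hJBz : JB z = x := resolvent_eq_of_mem B hB.1 γ hγ JB hJB x b hb
    have ha' : a = -b - C x := by
      have : a = a + b + C x - b - C x := by abel
      rw [this, hsum]; abel
    have hu : (2 : ℝ) • JB z - z - γ • C (JB z) = x + γ • a := by
      rw [hJBz, ha', hz]; module
    have hJAu : JA ((2 : ℝ) • JB z - z - γ • C (JB z)) = x := by
      rw [hu]; exact resolvent_eq_of_mem A hA.1 γ hγ JA hJA x a ha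
    refine ⟨z, ?_, hJBz⟩
    show T z = z
    rw [hT z, hJAu, hJBz]; abel
  · rintro ⟨z, hfix, hx⟩
    have hfix' : T z = z := hfix
    set u := (2 : ℝ) • JB z - z - γ • C (JB z) with hu
    have h2 : z - JB z + JA u = z := (hT z).symm.trans hfix'
    have hJAu : JA u = JB z := by
      have h3 : z - JB z + JA u = z - JB z + JB z := by rw [h2]; abel
      exact add_left_cancel h3
    have haA : γ⁻¹ • (u - JB z) ∈ A (JB z) := by
      have := hJA u; rwa [hJAu] at this
    have hbB : γ⁻¹ • (z - JB z) ∈ B (JB z) := hJB z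
    rw [← hx]
    refine ⟨γ⁻¹ • (u - JB z), haA, γ⁻¹ • (z - JB z), hbB, ?_⟩
    rw [hu]
    match_scalars <;> simp [hγγ] <;> ring
end

section
/- Let A, B : H → 2^H be maximally monotone, C : H → H β-cocoercive, γ > 0, and T = I - J_{γB} + J_{γA}(2J_{γB} - I - γC∘J_{γB}). Then Fix(T) = {x + γμ : 0 ∈ (A+B+C)x, μ ∈ (Bx) ∩ (-Ax - Cx)}. -/
/-- Uniqueness of resolvent points for a monotone operator. -/
lemma resolvent_unique {H : Type*} [NormedAddCommGroup H] [InnerProductSpace ℝ H]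
    (M : H → Set H)
    (hM : ∀ x y u v, u ∈ M x → v ∈ M y → 0 ≤ (inner ℝ (x - y) (u - v) : ℝ))
    (γ : ℝ) (hγ : 0 < γ) (u p q : H)
    (hp : γ⁻¹ • (u - p) ∈ M p) (hq : γ⁻¹ • (u - q) ∈ M q) : p = q := by
  have h := hM p q _ _ hp hq
  have heq : γ⁻¹ • (u - p) - γ⁻¹ • (u - q) = γ⁻¹ • (q - p) := by
    rw [← smul_sub]; congr 1; abel
  rw [heq, real_inner_smul_right] at h
  have h2 : (inner ℝ (p - q) (q - p) : ℝ) = -‖p - q‖ ^ 2 := by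
    rw [show q - p = -(p - q) by abel, inner_neg_right, real_inner_self_eq_norm_sq]
  rw [h2] at h
  have hγi : 0 < γ⁻¹ := inv_pos.mpr hγ
  have : ‖p - q‖ ^ 2 ≤ 0 := by nlinarith
  have : ‖p - q‖ = 0 := by nlinarith [norm_nonneg (p - q)]
  exact sub_eq_zero.mp (norm_eq_zero.mp this)

/-- Davis–Yin: characterization of the fixed point set of
`T = I - J_{γB} + J_{γA}∘(2 J_{γB} - I - γ C ∘ J_{γB})`. -/
theorem davis_yin_fixedPoints_characterization
    {H : Type*} [NormedAddCommGroup H] [InnerProductSpace ℝ H]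
    (A B : H → Set H) (hA : IsMaximalMonotone A) (hB : IsMaximalMonotone B)
    (C : H → H) (β : ℝ) (hβ : 0 < β)
    (hC : ∀ x y : H, β * ‖C x - C y‖ ^ 2 ≤ (inner ℝ (x - y) (C x - C y) : ℝ))
    (γ : ℝ) (hγ : 0 < γ)
    (JA JB : H → H)
    (hJA : ∀ u : H, γ⁻¹ • (u - JA u) ∈ A (JA u))
    (hJB : ∀ u : H, γ⁻¹ • (u - JB u) ∈ B (JB u))
    (T : H → H)
    (hT : ∀ z : H, T z = z - JB z + JA ((2 : ℝ) • JB z - z - γ • C (JB z))) :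
    {z : H | T z = z} =
      {z : H | ∃ x μ : H, z = x + γ • μ ∧
        (∃ a ∈ A x, ∃ b ∈ B x, a + b + C x = 0) ∧
        μ ∈ B x ∧ (∃ a ∈ A x, μ = -a - C x)} := by
  ext z
  simp only [Set.mem_setOf_eq]
  constructor
  · intro hz
    set x := JB z with hx
    set u := (2 : ℝ) • x - z - γ • C x with hu
    have hfix : JA u = x := by
      have h := hz
      rw [hT z] at h
      have : JA u = z - (z - x) := by rw [eq_sub_iff_add_eq']; exact h
      rw [this]; abel
    set μ := γ⁻¹ • (z - x) with hμ
    have hμB : μ ∈ B x := hJB z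
    have hzxμ : z = x + γ • μ := by
      rw [hμ, smul_smul, mul_inv_cancel₀ hγ.ne', one_smul]; abel
    have ha : -μ - C x ∈ A x := by
      have h := hJA u
      rw [hfix] at h
      have heq : γ⁻¹ • (u - x) = -μ - C x := by
        rw [hu, hμ]
        match_scalars <;> field_simp <;> norm_num
      rwa [heq] at h
    exact ⟨x, μ, hzxμ, ⟨-μ - C x, ha, μ, hμB, by abel⟩, hμB, ⟨-μ - C x, ha, by abel⟩⟩
  · rintro ⟨x, μ, hz, -, hμB, a, haA, hμa⟩
    have ha : a = -μ - C x := by rw [hμa]; abel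
    have hBx : γ⁻¹ • (z - x) ∈ B x := by
      have : γ⁻¹ • (z - x) = μ := by
        rw [hz, show x + γ • μ - x = γ • μ by abel, smul_smul,
          inv_mul_cancel₀ hγ.ne', one_smul]
      rwa [this]
    have hJBz : JB z = x := resolvent_unique B hB.1 γ hγ z (JB z) x (hJB z) hBx
    set u := (2 : ℝ) • x - z - γ • C x with hu
    have hAx : γ⁻¹ • (u - x) ∈ A x := by
      have : γ⁻¹ • (u - x) = a := by
        rw [hu, hz, ha]
        match_scalars <;> field_simp <;> norm_num
      rwa [this]
    have hJAu : JA u = x := resolvent_unique A hA.1 γ hγ u (JA u) x (hJA u) hAx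
    rw [hT z, hJBz, ← hu, hJAu]
    abel
end

section
/- Let h : H → ℝ be convex and Fréchet differentiable with (1/β)-Lipschitz continuous gradient. Then ∇h is β-cocoercive: ⟨x - y, ∇h(x) - ∇h(y)⟩ ≥ β‖∇h(x) - ∇h(y)‖² for all x, y ∈ H (Baillon–Haddad theorem). -/
open Set

section aux

variable {H : Type*} [NormedAddCommGroup H] [InnerProductSpace ℝ H] [CompleteSpace H]

/-- derivative of `h` along a line. -/
lemma line_hasDerivAt (h : H → ℝ) (h' : H → H)
    (hdiff : ∀ x : H, HasGradientAt h (h' x) x) (x v : H) (t : ℝ) :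
    HasDerivAt (fun s : ℝ => h (x + s • v)) (inner ℝ (h' (x + t • v)) v : ℝ) t := by
  have hc : HasDerivAt (fun s : ℝ => x + s • v) v t := by
    simpa using ((hasDerivAt_id t).smul_const v).const_add x
  have hf := (hasGradientAt_iff_hasFDerivAt.mp (hdiff (x + t • v)))
  have := hf.comp_hasDerivAt t hc
  simp only [InnerProductSpace.toDual_apply_apply] at this
  exact this

/-- convexity gradient inequality -/
lemma grad_ineq (h : H → ℝ) (h' : H → H)
    (hconv : ConvexOn ℝ Set.univ h)
    (hdiff : ∀ x : H, HasGradientAt h (h' x) x) (x y : H) :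
    (inner ℝ (h' x) (y - x) : ℝ) ≤ h y - h x := by
  set g : ℝ → ℝ := fun t => h (x + t • (y - x)) with hg
  have hgconv : ConvexOn ℝ Set.univ g := by
    have := hconv.comp_affineMap (AffineMap.lineMap x y)
    have hEq : (fun t : ℝ => h (x + t • (y - x))) = h ∘ (AffineMap.lineMap x y) := by
      funext t
      simp [AffineMap.lineMap_apply, add_comm]
    rw [hg, hEq]
    simpa using this
  have hd : HasDerivAt g (inner ℝ (h' x) (y - x) : ℝ) 0 := by
    have := line_hasDerivAt h h' hdiff x (y - x) 0
    simpa using this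
  have hs := hgconv.le_slope_of_hasDerivAt (mem_univ (0:ℝ)) (mem_univ (1:ℝ))
    one_pos hd
  have : slope g 0 1 = h y - h x := by
    simp [slope_def_field, g]
  linarith [hs, this ▸ hs]

/-- descent lemma -/
lemma descent (h : H → ℝ) (h' : H → H) (β : ℝ) (hβ : 0 < β)
    (hdiff : ∀ x : H, HasGradientAt h (h' x) x)
    (hlip : ∀ x y : H, ‖h' x - h' y‖ ≤ (1 / β) * ‖x - y‖) (x y : H) :
    h y ≤ h x + (inner ℝ (h' x) (y - x) : ℝ) + 1 / (2 * β) * ‖y - x‖ ^ 2 := by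
  set v := y - x with hv
  set φ : ℝ → ℝ := fun t =>
    h x + t * (inner ℝ (h' x) v : ℝ) + t ^ 2 / (2 * β) * ‖v‖ ^ 2 - h (x + t • v) with hφ
  have hφd : ∀ t : ℝ, HasDerivAt φ
      ((inner ℝ (h' x) v : ℝ) + t / β * ‖v‖ ^ 2 - (inner ℝ (h' (x + t • v)) v : ℝ)) t := by
    intro t
    have h1 : HasDerivAt (fun s : ℝ => h x + s * (inner ℝ (h' x) v : ℝ)
        + s ^ 2 / (2 * β) * ‖v‖ ^ 2)
        ((inner ℝ (h' x) v : ℝ) + t / β * ‖v‖ ^ 2) t := by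
      have ha : HasDerivAt (fun s : ℝ => s * (inner ℝ (h' x) v : ℝ))
          (inner ℝ (h' x) v : ℝ) t := by
        simpa using (hasDerivAt_id t).mul_const (inner ℝ (h' x) v : ℝ)
      have hb : HasDerivAt (fun s : ℝ => s ^ 2 / (2 * β) * ‖v‖ ^ 2)
          (t / β * ‖v‖ ^ 2) t := by
        have : HasDerivAt (fun s : ℝ => s ^ 2) (2 * t) t := by
          simpa using hasDerivAt_pow 2 t
        have := (this.div_const (2 * β)).mul_const (‖v‖ ^ 2)
        refine this.congr_deriv ?_
        ring
      have := (ha.const_add (h x)).add hb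
      exact this
    exact h1.sub (line_hasDerivAt h h' hdiff x v t)
  have hmono : MonotoneOn φ (Icc 0 1) := by
    apply monotoneOn_of_hasDerivWithinAt_nonneg (convex_Icc 0 1)
      (fun t _ => (hφd t).continuousAt.continuousWithinAt)
      (fun t _ => (hφd t).hasDerivWithinAt)
    intro t ht
    rw [interior_Icc] at ht
    have htpos : (0:ℝ) ≤ t := le_of_lt ht.1
    have key : (inner ℝ (h' (x + t • v)) v : ℝ) - (inner ℝ (h' x) v : ℝ) ≤ t / β * ‖v‖ ^ 2 := by
      have h1 : (inner ℝ (h' (x + t • v)) v : ℝ) - (inner ℝ (h' x) v : ℝ)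
          = (inner ℝ (h' (x + t • v) - h' x) v : ℝ) := by
        rw [inner_sub_left]
      rw [h1]
      calc (inner ℝ (h' (x + t • v) - h' x) v : ℝ)
          ≤ ‖h' (x + t • v) - h' x‖ * ‖v‖ := real_inner_le_norm _ _
        _ ≤ (1 / β) * ‖x + t • v - x‖ * ‖v‖ := by
            apply mul_le_mul_of_nonneg_right (hlip _ _) (norm_nonneg _)
        _ = t / β * ‖v‖ ^ 2 := by
            rw [show x + t • v - x = t • v by abel, norm_smul]
            simp [abs_of_nonneg htpos]
            ring
    linarith
  have h01 := hmono (left_mem_Icc.mpr one_pos.le) (right_mem_Icc.mpr one_pos.le) one_pos.le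
  have hφ0 : φ 0 = 0 := by simp [hφ]
  have hφ1 : φ 1 = h x + (inner ℝ (h' x) v : ℝ) + 1 / (2 * β) * ‖v‖ ^ 2 - h y := by
    simp only [hφ, one_smul, one_pow, one_mul, hv]
    rw [show x + (y - x) = y by abel]
  rw [hφ0, hφ1] at h01
  linarith

end aux

/-- Baillon–Haddad theorem: a convex differentiable function with (1/β)-Lipschitz
gradient has a β-cocoercive gradient. -/
theorem baillon_haddad
    {H : Type*} [NormedAddCommGroup H] [InnerProductSpace ℝ H] [CompleteSpace H]
    (h : H → ℝ) (h' : H → H) (β : ℝ) (hβ : 0 < β)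
    (hconv : ConvexOn ℝ Set.univ h)
    (hdiff : ∀ x : H, HasGradientAt h (h' x) x)
    (hlip : ∀ x y : H, ‖h' x - h' y‖ ≤ (1 / β) * ‖x - y‖) :
    ∀ x y : H, β * ‖h' x - h' y‖ ^ 2 ≤ (inner ℝ (x - y) (h' x - h' y) : ℝ) := by
  -- key one-sided estimate
  have key : ∀ x y : H, h x + (inner ℝ (h' x) (y - x) : ℝ)
      + β / 2 * ‖h' y - h' x‖ ^ 2 ≤ h y := by
    intro x y
    set z := y - β • (h' y - h' x) with hz
    have hA := grad_ineq h h' hconv hdiff x z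
    have hB := descent h h' β hβ hdiff hlip y z
    have hz_y : z - y = -(β • (h' y - h' x)) := by rw [hz]; abel
    have h1 : (inner ℝ (h' y) (z - y) : ℝ) = -β * (inner ℝ (h' y) (h' y - h' x) : ℝ) := by
      rw [hz_y, inner_neg_right, real_inner_smul_right]; ring
    have h2 : ‖z - y‖ ^ 2 = β ^ 2 * ‖h' y - h' x‖ ^ 2 := by
      rw [hz_y, norm_neg, norm_smul]
      rw [Real.norm_eq_abs, abs_of_pos hβ]
      ring
    have h3 : (inner ℝ (h' x) (z - x) : ℝ)
        = (inner ℝ (h' x) (y - x) : ℝ) - β * (inner ℝ (h' x) (h' y - h' x) : ℝ) := by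
      have : z - x = (y - x) - β • (h' y - h' x) := by rw [hz]; abel
      rw [this, inner_sub_right, real_inner_smul_right]
    have h4 : (inner ℝ (h' y) (h' y - h' x) : ℝ) - (inner ℝ (h' x) (h' y - h' x) : ℝ)
        = ‖h' y - h' x‖ ^ 2 := by
      rw [← inner_sub_left, real_inner_self_eq_norm_sq]
    have hB' : h z ≤ h y + (-β * (inner ℝ (h' y) (h' y - h' x) : ℝ))
        + 1 / (2 * β) * (β ^ 2 * ‖h' y - h' x‖ ^ 2) := by
      rw [← h1, ← h2]; exact hB
    have hA' : h x + ((inner ℝ (h' x) (y - x) : ℝ)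
        - β * (inner ℝ (h' x) (h' y - h' x) : ℝ)) ≤ h z := by
      rw [← h3]; linarith [hA]
    have hβ' : 1 / (2 * β) * β ^ 2 = β / 2 := by field_simp
    nlinarith [hA', hB', h4]
  intro x y
  have k1 := key x y
  have k2 := key y x
  have e1 : (inner ℝ (h' x) (y - x) : ℝ) + (inner ℝ (h' y) (x - y) : ℝ)
      = -(inner ℝ (x - y) (h' x - h' y) : ℝ) := by
    simp only [inner_sub_left, inner_sub_right]
    rw [real_inner_comm (h' x) y, real_inner_comm (h' x) x,
      real_inner_comm (h' y) x, real_inner_comm (h' y) y]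
    ring
  have e2 : ‖h' y - h' x‖ = ‖h' x - h' y‖ := by rw [← norm_neg]; congr 1; abel
  rw [e2] at k1
  linarith [k1, k2, e1]
end
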